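/- arXiv:2304.12779 — 6 statements merged into one kernel-verified Lean document; each statement's English description precedes it below -/
import Mathlib

section
/- Consider a 5-path-center configuration in a finite simple graph G. (1) If |A2| = 5, then G contains vertex-disjoint paths, each of order at least 4, covering at least 25 vertices in total. (2) If |A2| = 4, then G contains such paths covering at least 20 vertices in total. (3) If |A2| = 3, then G contains such paths covering at least 15 vertices in total, and if moreover A1 ∪ A2 = {1,2,3,4,5}, then at least 17 vertices in total. -/
open SimpleGraph

/-- Degree of a vertex in a subgraph, via `Set.ncard` of the neighbor set. -/
noncomputable def subDeg {V : Type*} {G : SimpleGraph V} (H : G.Subgraph) (v : V) : ℕ :=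
  (H.neighborSet v).ncard

/-- A subgraph is a path: it is a single vertex, or it is connected with exactly two
vertices of degree 1 and all other vertices of degree 2. -/
def IsPathSubgraph {V : Type*} {G : SimpleGraph V} (P : G.Subgraph) : Prop :=
  P.Connected ∧
  ((∃ v, P.verts = {v}) ∨
    (({v ∈ P.verts | subDeg P v = 1}).ncard = 2 ∧
      ∀ v ∈ P.verts, subDeg P v = 1 ∨ subDeg P v = 2))

/-- `x` is an endpoint of the path subgraph `P` (for paths of order at least 2). -/
def IsPathEndpoint {V : Type*} {G : SimpleGraph V} (P : G.Subgraph) (x : V) : Prop :=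
  x ∈ P.verts ∧ subDeg P x = 1

/-- A matching of `G`: a finite set of edges of `G`, no two of which share an endpoint. -/
def IsMatchingSet {V : Type*} (G : SimpleGraph V) (M : Finset (Sym2 V)) : Prop :=
  ↑M ⊆ G.edgeSet ∧ ∀ e ∈ M, ∀ f ∈ M, e ≠ f → ∀ v : V, v ∈ e → v ∉ f

/-- A maximum matching of `G`. -/
def IsMaxMatchingSet {V : Type*} (G : SimpleGraph V) (M : Finset (Sym2 V)) : Prop :=
  IsMatchingSet G M ∧ ∀ M' : Finset (Sym2 V), IsMatchingSet G M' → M'.card ≤ M.card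

/-- There is a collection of vertex-disjoint path subgraphs of `G`, each of order at
least 4, whose total number of vertices `n` satisfies `p n`. -/
def HasDisjointPathsCovering {V : Type*} (G : SimpleGraph V) (p : ℕ → Prop) : Prop :=
  ∃ Ps : Set G.Subgraph,
    (∀ P ∈ Ps, IsPathSubgraph P ∧ 4 ≤ P.verts.ncard) ∧
    (Ps.Pairwise fun P Q => Disjoint P.verts Q.verts) ∧
    p ((⋃ P ∈ Ps, P.verts).ncard)

/-- There is a collection of vertex-disjoint path subgraphs of `G`, each of order at
least 4, covering at least `N` vertices in total. -/
def HasDisjointPathCover {V : Type*} (G : SimpleGraph V) (N : ℕ) : Prop :=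
  HasDisjointPathsCovering G fun n => N ≤ n

/-- `opt G`: the maximum total number of vertices in a collection of vertex-disjoint
paths of `G`, each of order at least 4. -/
noncomputable def optValue {V : Type*} (G : SimpleGraph V) : ℕ :=
  sSup {n : ℕ |
    ∃ Ps : Set G.Subgraph,
      (∀ P ∈ Ps, IsPathSubgraph P ∧ 4 ≤ P.verts.ncard) ∧
      (Ps.Pairwise fun P Q => Disjoint P.verts Q.verts) ∧
      n = (⋃ P ∈ Ps, P.verts).ncard}

/-- Degree of a vertex in the spanning subgraph determined by an edge set `F`. -/
noncomputable def edgeDeg {W : Type*} (F : Set (Sym2 W)) (v : W) : ℕ :=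
  {e ∈ F | v ∈ e}.ncard

/-- An edge set `C` saturates a vertex set `B` if some edge of `C` has an endpoint in `B`. -/
def Saturates {W : Type*} (C : Set (Sym2 W)) (B : Set W) : Prop :=
  ∃ e ∈ C, ∃ v ∈ B, v ∈ e

/-- A 5-path-center configuration in `G`: a path `v 0 – v 1 – v 2 – v 3 – v 4` in `G`
(indices `0,…,4` correspond to `v1,…,v5`), disjoint index sets `A1` (1-anchors) and
`A2` (2-anchors), pairwise disjoint sets `U i` avoiding the `v i`'s, for each
`i ∈ A1 ∪ A2` a path `Q i` of order at least 3 with endpoint `v i` and all other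
vertices in `U i`, and for each `i ∈ A2` additionally a path `P i` of order at least 5
with `v i ∈ V(P i) ⊆ {v i} ∪ U i`. -/
structure FivePathConfig {V : Type*} (G : SimpleGraph V) where
  v : Fin 5 → V
  inj : Function.Injective v
  adj : ∀ i : Fin 4, G.Adj (v i.castSucc) (v i.succ)
  A1 : Finset (Fin 5)
  A2 : Finset (Fin 5)
  hA : Disjoint A1 A2
  U : Fin 5 → Set V
  hUv : ∀ i ∈ A1 ∪ A2, Disjoint (U i) (Set.range v)
  hUdisj : ∀ i ∈ A1 ∪ A2, ∀ j ∈ A1 ∪ A2, i ≠ j → Disjoint (U i) (U j)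
  Q : Fin 5 → G.Subgraph
  hQpath : ∀ i ∈ A1 ∪ A2, IsPathSubgraph (Q i)
  hQcard : ∀ i ∈ A1 ∪ A2, 3 ≤ (Q i).verts.ncard
  hQend : ∀ i ∈ A1 ∪ A2, IsPathEndpoint (Q i) (v i)
  hQverts : ∀ i ∈ A1 ∪ A2, (Q i).verts ⊆ insert (v i) (U i)
  P : Fin 5 → G.Subgraph
  hPpath : ∀ i ∈ A2, IsPathSubgraph (P i)
  hPcard : ∀ i ∈ A2, 5 ≤ (P i).verts.ncard
  hPv : ∀ i ∈ A2, v i ∈ (P i).verts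
  hPverts : ∀ i ∈ A2, (P i).verts ⊆ insert (v i) (U i)


set_option linter.unusedSectionVars false
set_option linter.unusedVariables false

section Glue
variable {V : Type*} [Fintype V] [DecidableEq V] {G : SimpleGraph V}

lemma nbr_empty (Q : G.Subgraph) {v : V} (hv : v ∉ Q.verts) : Q.neighborSet v = ∅ := by
  ext w
  simp only [Subgraph.mem_neighborSet, Set.mem_empty_iff_false, iff_false]
  exact fun h => hv (Q.edge_vert h)

lemma path_two_endpoints {P : G.Subgraph} {a : V} (hP : IsPathSubgraph P)
    (ha : IsPathEndpoint P a) :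
    ({v ∈ P.verts | subDeg P v = 1}).ncard = 2 ∧
      ∀ v ∈ P.verts, subDeg P v = 1 ∨ subDeg P v = 2 := by
  rcases hP.2 with ⟨w, hw⟩ | h
  · exfalso
    have haw : a = w := by have := ha.1; rw [hw] at this; simpa using this
    have hnb : P.neighborSet a = ∅ := by
      ext x
      simp only [Subgraph.mem_neighborSet, Set.mem_empty_iff_false, iff_false]
      intro hx
      have hxv : x ∈ P.verts := P.edge_vert hx.symm
      rw [hw] at hxv
      have : x = w := by simpa using hxv
      subst this
      rw [haw] at hx
      exact (G.loopless.irrefl _) (P.adj_sub hx)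
    have := ha.2
    rw [show subDeg P a = (P.neighborSet a).ncard from rfl, hnb] at this
    simp at this
  · exact h

lemma glue {P Q : G.Subgraph} {a : V} (hP : IsPathSubgraph P) (hQ : IsPathSubgraph Q)
    (haP : IsPathEndpoint P a) (haQ : IsPathEndpoint Q a)
    (hint : P.verts ∩ Q.verts = {a}) :
    IsPathSubgraph (P ⊔ Q) ∧ (P ⊔ Q).verts.ncard + 1 = P.verts.ncard + Q.verts.ncard ∧
    (∀ x, IsPathEndpoint P x → x ≠ a → IsPathEndpoint (P ⊔ Q) x) ∧
    (∀ x, IsPathEndpoint Q x → x ≠ a → IsPathEndpoint (P ⊔ Q) x) := by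
  obtain ⟨hSP, hdP⟩ := path_two_endpoints hP haP
  obtain ⟨hSQ, hdQ⟩ := path_two_endpoints hQ haQ
  have hPnotQ : ∀ v ∈ P.verts, v ≠ a → v ∉ Q.verts := by
    intro v hv hva hvQ
    exact hva (by have : v ∈ ({a} : Set V) := hint ▸ ⟨hv, hvQ⟩; simpa using this)
  have hQnotP : ∀ v ∈ Q.verts, v ≠ a → v ∉ P.verts := by
    intro v hv hva hvP
    exact hva (by have : v ∈ ({a} : Set V) := hint ▸ ⟨hvP, hv⟩; simpa using this)
  have f2P : ∀ v ∈ P.verts, v ≠ a → subDeg (P ⊔ Q) v = subDeg P v := by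
    intro v hv hva
    show (_ : Set V).ncard = _
    rw [Subgraph.neighborSet_sup, nbr_empty Q (hPnotQ v hv hva), Set.union_empty]
    rfl
  have f2Q : ∀ v ∈ Q.verts, v ≠ a → subDeg (P ⊔ Q) v = subDeg Q v := by
    intro v hv hva
    show (_ : Set V).ncard = _
    rw [Subgraph.neighborSet_sup, nbr_empty P (hQnotP v hv hva), Set.empty_union]
    rfl
  have hnbdisj : Disjoint (P.neighborSet a) (Q.neighborSet a) := by
    rw [Set.disjoint_left]
    intro w hwP hwQ
    have hw1 : w ∈ P.verts := P.edge_vert hwP.symm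
    have hw2 : w ∈ Q.verts := Q.edge_vert hwQ.symm
    have : w = a := by have : w ∈ ({a} : Set V) := hint ▸ ⟨hw1, hw2⟩; simpa using this
    subst this
    exact (G.loopless.irrefl _) (P.adj_sub hwP)
  have f3 : subDeg (P ⊔ Q) a = 2 := by
    show (_ : Set V).ncard = 2
    rw [Subgraph.neighborSet_sup,
      Set.ncard_union_eq hnbdisj (Set.toFinite _) (Set.toFinite _)]
    have h1 : (P.neighborSet a).ncard = 1 := haP.2
    have h2 : (Q.neighborSet a).ncard = 1 := haQ.2
    omega
  have hvu : (P ⊔ Q).verts = P.verts ∪ Q.verts := rfl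
  have hconn : (P ⊔ Q).Connected := by
    refine Subgraph.connected_sup hP.1.preconnected hQ.1.preconnected ⟨a, ?_⟩
    rw [Subgraph.verts_inf, hint]
    rfl
  have hSeq : {v ∈ (P ⊔ Q).verts | subDeg (P ⊔ Q) v = 1} =
      ({v ∈ P.verts | subDeg P v = 1} \ {a}) ∪ ({v ∈ Q.verts | subDeg Q v = 1} \ {a}) := by
    ext v
    simp only [Set.mem_setOf_eq, Set.mem_union, Set.mem_diff, Set.mem_singleton_iff, hvu,
      Set.mem_union]
    constructor
    · rintro ⟨hv, hd⟩
      have hva : v ≠ a := by rintro rfl; rw [f3] at hd; omega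
      rcases hv with hp | hq
      · exact Or.inl ⟨⟨hp, by rw [← f2P v hp hva]; exact hd⟩, hva⟩
      · exact Or.inr ⟨⟨hq, by rw [← f2Q v hq hva]; exact hd⟩, hva⟩
    · rintro (⟨⟨hv, hd⟩, hva⟩ | ⟨⟨hv, hd⟩, hva⟩)
      · exact ⟨Or.inl hv, by rw [f2P v hv hva]; exact hd⟩
      · exact ⟨Or.inr hv, by rw [f2Q v hv hva]; exact hd⟩
  have haSP : a ∈ {v ∈ P.verts | subDeg P v = 1} := ⟨haP.1, haP.2⟩
  have haSQ : a ∈ {v ∈ Q.verts | subDeg Q v = 1} := ⟨haQ.1, haQ.2⟩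
  have hc1 : ({v ∈ P.verts | subDeg P v = 1} \ {a}).ncard = 1 := by
    rw [Set.ncard_diff_singleton_of_mem haSP, hSP]
  have hc2 : ({v ∈ Q.verts | subDeg Q v = 1} \ {a}).ncard = 1 := by
    rw [Set.ncard_diff_singleton_of_mem haSQ, hSQ]
  have hdisj2 : Disjoint ({v ∈ P.verts | subDeg P v = 1} \ {a})
      ({v ∈ Q.verts | subDeg Q v = 1} \ {a}) := by
    rw [Set.disjoint_left]
    rintro w ⟨⟨hw, _⟩, hwa⟩ ⟨⟨hw', _⟩, _⟩
    exact hPnotQ w hw hwa hw'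
  refine ⟨⟨hconn, Or.inr ⟨?_, ?_⟩⟩, ?_, ?_, ?_⟩
  · rw [hSeq, Set.ncard_union_eq hdisj2 (Set.toFinite _) (Set.toFinite _), hc1, hc2]
  · intro v hv
    rw [hvu] at hv
    by_cases hva : v = a
    · subst hva; exact Or.inr f3
    · rcases hv with hp | hq
      · rw [f2P v hp hva]; exact hdP v hp
      · rw [f2Q v hq hva]; exact hdQ v hq
  · have := Set.ncard_union_add_ncard_inter P.verts Q.verts (Set.toFinite _) (Set.toFinite _)
    rw [hint, Set.ncard_singleton] at this
    rw [hvu]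
    omega
  · intro x hx hxa
    exact ⟨Or.inl hx.1, by rw [f2P x hx.1 hxa]; exact hx.2⟩
  · intro x hx hxa
    exact ⟨Or.inr hx.1, by rw [f2Q x hx.1 hxa]; exact hx.2⟩

lemma edgePath {a b : V} (h : G.Adj a b) :
    IsPathSubgraph (G.subgraphOfAdj h) ∧ IsPathEndpoint (G.subgraphOfAdj h) a ∧
    IsPathEndpoint (G.subgraphOfAdj h) b ∧ (G.subgraphOfAdj h).verts.ncard = 2 := by
  have hne := h.ne
  have hda : subDeg (G.subgraphOfAdj h) a = 1 := by
    show (_ : Set V).ncard = 1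
    rw [neighborSet_fst_subgraphOfAdj]
    exact Set.ncard_singleton b
  have hdb : subDeg (G.subgraphOfAdj h) b = 1 := by
    show (_ : Set V).ncard = 1
    rw [neighborSet_snd_subgraphOfAdj]
    exact Set.ncard_singleton a
  have hverts : (G.subgraphOfAdj h).verts = {a, b} := rfl
  have hS : {v ∈ (G.subgraphOfAdj h).verts | subDeg (G.subgraphOfAdj h) v = 1} = {a, b} := by
    ext v
    simp only [Set.mem_setOf_eq, hverts, Set.mem_insert_iff, Set.mem_singleton_iff]
    constructor
    · rintro ⟨hv, _⟩; exact hv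
    · rintro (rfl | rfl)
      · exact ⟨Or.inl rfl, hda⟩
      · exact ⟨Or.inr rfl, hdb⟩
  refine ⟨⟨Subgraph.subgraphOfAdj_connected h, Or.inr ⟨?_, ?_⟩⟩, ⟨?_, hda⟩, ⟨?_, hdb⟩, ?_⟩
  · rw [hS]; exact Set.ncard_pair hne
  · intro v hv
    rw [hverts] at hv
    rcases hv with rfl | hv
    · exact Or.inl hda
    · rw [Set.mem_singleton_iff] at hv; subst hv; exact Or.inl hdb
  · rw [hverts]; exact Or.inl rfl
  · rw [hverts]; exact Or.inr rfl
  · rw [hverts]; exact Set.ncard_pair hne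

end Glue

lemma coverLemma {V : Type*} [Fintype V] [DecidableEq V] (G : SimpleGraph V)
    {ι : Type*} [DecidableEq ι] (s : Finset ι) (f : ι → G.Subgraph) (c : ι → ℕ) (N : ℕ)
    (hpath : ∀ i ∈ s, IsPathSubgraph (f i))
    (h4 : ∀ i ∈ s, 4 ≤ (f i).verts.ncard)
    (hc : ∀ i ∈ s, c i ≤ (f i).verts.ncard)
    (hdisj : ∀ i ∈ s, ∀ j ∈ s, i ≠ j → Disjoint (f i).verts (f j).verts)
    (hN : N ≤ ∑ i ∈ s, c i) : HasDisjointPathCover G N := by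
  refine ⟨f '' ↑s, ?_, ?_, ?_⟩
  · rintro P ⟨i, hi, rfl⟩
    exact ⟨hpath i hi, h4 i hi⟩
  · rintro P ⟨i, hi, rfl⟩ Q ⟨j, hj, rfl⟩ hne
    have hij : i ≠ j := by rintro rfl; exact hne rfl
    exact hdisj i hi j hj hij
  · have hbU : (⋃ P ∈ f '' (↑s : Set ι), P.verts) = ⋃ i ∈ (↑s : Set ι), (f i).verts := by
      rw [Set.biUnion_image]
    rw [hbU]
    have hfin : (⋃ i ∈ (↑s : Set ι), (f i).verts) =
        ↑(s.biUnion fun i => (f i).verts.toFinite.toFinset) := by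
      rw [Finset.coe_biUnion]
      simp
    rw [hfin, Set.ncard_coe_finset]
    have hdisj' : ∀ i ∈ s, ∀ j ∈ s, i ≠ j →
        Disjoint ((f i).verts.toFinite.toFinset) ((f j).verts.toFinite.toFinset) := by
      intro i hi j hj hij
      rw [Set.Finite.disjoint_toFinset]
      exact hdisj i hi j hj hij
    rw [Finset.card_biUnion hdisj']
    refine le_trans hN (le_trans (Finset.sum_le_sum ?_) le_rfl)
    intro i hi
    rw [← Set.ncard_eq_toFinset_card _ (f i).verts.toFinite]
    exact hc i hi

section Config
variable {V : Type*} [Fintype V] [DecidableEq V] {G : SimpleGraph V}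

lemma vnotinU (cfg : FivePathConfig G) {i : Fin 5} (hi : i ∈ cfg.A1 ∪ cfg.A2) (j : Fin 5) :
    cfg.v j ∉ cfg.U i :=
  fun h => Set.disjoint_left.mp (cfg.hUv i hi) h ⟨j, rfl⟩

lemma blockDisj (cfg : FivePathConfig G) {i j : Fin 5} (hi : i ∈ cfg.A1 ∪ cfg.A2)
    (hj : j ∈ cfg.A1 ∪ cfg.A2) (hij : i ≠ j) :
    Disjoint (insert (cfg.v i) (cfg.U i)) (insert (cfg.v j) (cfg.U j)) := by
  rw [Set.disjoint_left]
  intro x hx hy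
  simp only [Set.mem_insert_iff] at hx hy
  rcases hx with rfl | hx
  · rcases hy with h | h
    · exact hij (cfg.inj h)
    · exact vnotinU cfg hj i h
  · rcases hy with rfl | hy
    · exact vnotinU cfg hi j hx
    · exact Set.disjoint_left.mp (cfg.hUdisj i hi j hj hij) hx hy

lemma bridge (cfg : FivePathConfig G) {i j : Fin 5} (hi : i ∈ cfg.A1 ∪ cfg.A2)
    (hj : j ∈ cfg.A1 ∪ cfg.A2) (hij : i ≠ j) (hadj : G.Adj (cfg.v i) (cfg.v j)) :
    ∃ R : G.Subgraph, IsPathSubgraph R ∧ 6 ≤ R.verts.ncard ∧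
      R.verts ⊆ insert (cfg.v i) (cfg.U i) ∪ insert (cfg.v j) (cfg.U j) := by
  obtain ⟨hEpath, hEi, hEj, hEcard⟩ := edgePath hadj
  set E := G.subgraphOfAdj hadj with hE
  have hvij : cfg.v i ≠ cfg.v j := fun h => hij (cfg.inj h)
  have hQj := cfg.hQpath j hj
  have hQjend := cfg.hQend j hj
  have hQjsub := cfg.hQverts j hj
  have hint1 : E.verts ∩ (cfg.Q j).verts = {cfg.v j} := by
    ext x
    simp only [Set.mem_inter_iff, Set.mem_singleton_iff]
    constructor
    · rintro ⟨hx1, hx2⟩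
      have : x = cfg.v i ∨ x = cfg.v j := by simpa [hE] using hx1
      rcases this with rfl | rfl
      · rcases hQjsub hx2 with h | h
        · exact absurd h hvij
        · exact absurd h (vnotinU cfg hj i)
      · rfl
    · rintro rfl
      exact ⟨by simp [hE], hQjend.1⟩
  obtain ⟨hR1path, hR1card, hR1endE, _⟩ := glue hEpath hQj hEj hQjend hint1
  set R1 := E ⊔ cfg.Q j with hR1
  have hR1end : IsPathEndpoint R1 (cfg.v i) := hR1endE _ hEi hvij
  have hR1sub : R1.verts ⊆ insert (cfg.v i) (insert (cfg.v j) (cfg.U j)) := by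
    intro x hx
    rw [hR1, Subgraph.verts_sup] at hx
    rcases hx with hx | hx
    · have : x = cfg.v i ∨ x = cfg.v j := by simpa [hE] using hx
      rcases this with rfl | rfl
      · exact Set.mem_insert _ _
      · exact Set.mem_insert_of_mem _ (Set.mem_insert _ _)
    · exact Set.mem_insert_of_mem _ (hQjsub hx)
  have hQi := cfg.hQpath i hi
  have hQiend := cfg.hQend i hi
  have hQisub := cfg.hQverts i hi
  have hint2 : (cfg.Q i).verts ∩ R1.verts = {cfg.v i} := by
    ext x
    simp only [Set.mem_inter_iff, Set.mem_singleton_iff]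
    constructor
    · rintro ⟨hx1, hx2⟩
      rcases hQisub hx1 with rfl | hx1
      · rfl
      · exfalso
        rcases hR1sub hx2 with rfl | hx2
        · exact vnotinU cfg hi i hx1
        · rcases hx2 with rfl | hx2
          · exact vnotinU cfg hi j hx1
          · exact Set.disjoint_left.mp (cfg.hUdisj i hi j hj hij) hx1 hx2
    · rintro rfl
      exact ⟨hQiend.1, hR1end.1⟩
  obtain ⟨hRpath, hRcard, _, _⟩ := glue hQi hR1path hQiend hR1end hint2
  refine ⟨cfg.Q i ⊔ R1, hRpath, ?_, ?_⟩
  · have h3i := cfg.hQcard i hi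
    have h3j := cfg.hQcard j hj
    omega
  · intro x hx
    rw [Subgraph.verts_sup] at hx
    rcases hx with hx | hx
    · exact Or.inl (hQisub hx)
    · rcases hR1sub hx with rfl | hx
      · exact Or.inl (Set.mem_insert _ _)
      · exact Or.inr hx

lemma longbridge (cfg : FivePathConfig G) {i m j : Fin 5} (hi : i ∈ cfg.A1 ∪ cfg.A2)
    (hj : j ∈ cfg.A1 ∪ cfg.A2) (him : i ≠ m) (hmj : m ≠ j) (hij : i ≠ j)
    (hadj1 : G.Adj (cfg.v i) (cfg.v m)) (hadj2 : G.Adj (cfg.v m) (cfg.v j)) :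
    ∃ L : G.Subgraph, IsPathSubgraph L ∧ 7 ≤ L.verts.ncard ∧
      L.verts ⊆ insert (cfg.v m)
        (insert (cfg.v i) (cfg.U i) ∪ insert (cfg.v j) (cfg.U j)) := by
  obtain ⟨hE1path, hE1i, hE1m, hE1card⟩ := edgePath hadj1
  obtain ⟨hE2path, hE2m, hE2j, hE2card⟩ := edgePath hadj2
  set E1 := G.subgraphOfAdj hadj1 with hE1
  set E2 := G.subgraphOfAdj hadj2 with hE2
  have hvim : cfg.v i ≠ cfg.v m := fun h => him (cfg.inj h)
  have hvmj : cfg.v m ≠ cfg.v j := fun h => hmj (cfg.inj h)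
  have hvij : cfg.v i ≠ cfg.v j := fun h => hij (cfg.inj h)
  have hQj := cfg.hQpath j hj
  have hQjend := cfg.hQend j hj
  have hQjsub := cfg.hQverts j hj
  have hint1 : E2.verts ∩ (cfg.Q j).verts = {cfg.v j} := by
    ext x
    simp only [Set.mem_inter_iff, Set.mem_singleton_iff]
    constructor
    · rintro ⟨hx1, hx2⟩
      have : x = cfg.v m ∨ x = cfg.v j := by simpa [hE2] using hx1
      rcases this with rfl | rfl
      · rcases hQjsub hx2 with h | h
        · exact absurd h hvmj
        · exact absurd h (vnotinU cfg hj m)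
      · rfl
    · rintro rfl
      exact ⟨by simp [hE2], hQjend.1⟩
  obtain ⟨hR1path, hR1card, hR1endE, _⟩ := glue hE2path hQj hE2j hQjend hint1
  set R1 := E2 ⊔ cfg.Q j with hR1
  have hR1end : IsPathEndpoint R1 (cfg.v m) := hR1endE _ hE2m hvmj
  have hR1sub : R1.verts ⊆ insert (cfg.v m) (insert (cfg.v j) (cfg.U j)) := by
    intro x hx
    rw [hR1, Subgraph.verts_sup] at hx
    rcases hx with hx | hx
    · have : x = cfg.v m ∨ x = cfg.v j := by simpa [hE2] using hx
      rcases this with rfl | rfl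
      · exact Set.mem_insert _ _
      · exact Set.mem_insert_of_mem _ (Set.mem_insert _ _)
    · exact Set.mem_insert_of_mem _ (hQjsub hx)
  have hint2 : E1.verts ∩ R1.verts = {cfg.v m} := by
    ext x
    simp only [Set.mem_inter_iff, Set.mem_singleton_iff]
    constructor
    · rintro ⟨hx1, hx2⟩
      have : x = cfg.v i ∨ x = cfg.v m := by simpa [hE1] using hx1
      rcases this with rfl | rfl
      · exfalso
        rcases hR1sub hx2 with h | h
        · exact hvim h
        · rcases h with h | h
          · exact hvij h
          · exact vnotinU cfg hj i h
      · rfl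
    · rintro rfl
      exact ⟨by simp [hE1], hR1end.1⟩
  obtain ⟨hR2path, hR2card, hR2endE, _⟩ := glue hE1path hR1path hE1m hR1end hint2
  set R2 := E1 ⊔ R1 with hR2
  have hR2end : IsPathEndpoint R2 (cfg.v i) := hR2endE _ hE1i hvim
  have hR2sub : R2.verts ⊆
      insert (cfg.v i) (insert (cfg.v m) (insert (cfg.v j) (cfg.U j))) := by
    intro x hx
    rw [hR2, Subgraph.verts_sup] at hx
    rcases hx with hx | hx
    · have : x = cfg.v i ∨ x = cfg.v m := by simpa [hE1] using hx
      rcases this with rfl | rfl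
      · exact Set.mem_insert _ _
      · exact Set.mem_insert_of_mem _ (Set.mem_insert _ _)
    · exact Set.mem_insert_of_mem _ (hR1sub hx)
  have hQi := cfg.hQpath i hi
  have hQiend := cfg.hQend i hi
  have hQisub := cfg.hQverts i hi
  have hint3 : (cfg.Q i).verts ∩ R2.verts = {cfg.v i} := by
    ext x
    simp only [Set.mem_inter_iff, Set.mem_singleton_iff]
    constructor
    · rintro ⟨hx1, hx2⟩
      rcases hQisub hx1 with rfl | hx1
      · rfl
      · exfalso
        rcases hR2sub hx2 with rfl | hx2
        · exact vnotinU cfg hi i hx1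
        · rcases hx2 with rfl | hx2
          · exact vnotinU cfg hi m hx1
          · rcases hx2 with rfl | hx2
            · exact vnotinU cfg hi j hx1
            · exact Set.disjoint_left.mp (cfg.hUdisj i hi j hj hij) hx1 hx2
    · rintro rfl
      exact ⟨hQiend.1, hR2end.1⟩
  obtain ⟨hLpath, hLcard, _, _⟩ := glue hQi hR2path hQiend hR2end hint3
  refine ⟨cfg.Q i ⊔ R2, hLpath, ?_, ?_⟩
  · have h3i := cfg.hQcard i hi
    have h3j := cfg.hQcard j hj
    omega
  · intro x hx
    rw [Subgraph.verts_sup] at hx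
    rcases hx with hx | hx
    · exact Set.mem_insert_of_mem _ (Or.inl (hQisub hx))
    · rcases hR2sub hx with rfl | hx
      · exact Set.mem_insert_of_mem _ (Or.inl (Set.mem_insert _ _))
      · rcases hx with rfl | hx
        · exact Set.mem_insert _ _
        · exact Set.mem_insert_of_mem _ (Or.inr hx)

end Config

section Assemble
variable {V : Type*} [Fintype V] [DecidableEq V] {G : SimpleGraph V}

example : (![1,2,3] ⟨2, by omega⟩ : ℕ) = 3 := rfl
example : (17 : ℕ) ≤ ∑ x : Fin 3, ![7,5,5] x := by decide

lemma assembleAdj (cfg : FivePathConfig G) (i j k1 k2 k3 : Fin 5)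
    (hA1 : cfg.A1 = {i, j}) (hij : i ≠ j) (h12 : k1 ≠ k2) (h13 : k1 ≠ k3) (h23 : k2 ≠ k3)
    (hk1 : k1 ∈ cfg.A2) (hk2 : k2 ∈ cfg.A2) (hk3 : k3 ∈ cfg.A2)
    (hadj : G.Adj (cfg.v i) (cfg.v j)) : HasDisjointPathCover G 17 := by
  have hiA : i ∈ cfg.A1 ∪ cfg.A2 := Finset.mem_union_left _ (by rw [hA1]; simp)
  have hjA : j ∈ cfg.A1 ∪ cfg.A2 := Finset.mem_union_left _ (by rw [hA1]; simp)
  have hmemA : ∀ k, k ∈ cfg.A2 → k ∈ cfg.A1 ∪ cfg.A2 := fun k hk => Finset.mem_union_right _ hk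
  have hnei : ∀ k, k ∈ cfg.A2 → i ≠ k := by
    intro k hk h
    have hiA1 : i ∈ cfg.A1 := by rw [hA1]; exact Finset.mem_insert_self i {j}
    exact Finset.disjoint_left.mp cfg.hA hiA1 (by rw [h]; exact hk)
  have hnej : ∀ k, k ∈ cfg.A2 → j ≠ k := by
    intro k hk h
    have hjA1 : j ∈ cfg.A1 := by
      rw [hA1]; exact Finset.mem_insert_of_mem (Finset.mem_singleton_self j)
    exact Finset.disjoint_left.mp cfg.hA hjA1 (by rw [h]; exact hk)
  obtain ⟨R, hRpath, hRcard, hRsub⟩ := bridge cfg hiA hjA hij hadj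
  have hblk : ∀ k, k ∈ cfg.A2 → Disjoint R.verts (cfg.P k).verts := by
    intro k hk
    refine Set.disjoint_of_subset hRsub (cfg.hPverts k hk) ?_
    exact Disjoint.union_left (blockDisj cfg hiA (hmemA k hk) (hnei k hk))
      (blockDisj cfg hjA (hmemA k hk) (hnej k hk))
  have hPP : ∀ k, k ∈ cfg.A2 → ∀ l, l ∈ cfg.A2 → k ≠ l →
      Disjoint (cfg.P k).verts (cfg.P l).verts := by
    intro k hk l hl hkl
    exact Set.disjoint_of_subset (cfg.hPverts k hk) (cfg.hPverts l hl)
      (blockDisj cfg (hmemA k hk) (hmemA l hl) hkl)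
  apply coverLemma G (Finset.univ : Finset (Fin 4))
    ![R, cfg.P k1, cfg.P k2, cfg.P k3] ![6, 5, 5, 5] 17
  · intro x _
    fin_cases x
    · exact hRpath
    · exact cfg.hPpath k1 hk1
    · exact cfg.hPpath k2 hk2
    · exact cfg.hPpath k3 hk3
  · intro x _
    fin_cases x
    · exact le_trans (by omega) hRcard
    · exact le_trans (by omega) (cfg.hPcard k1 hk1)
    · exact le_trans (by omega) (cfg.hPcard k2 hk2)
    · exact le_trans (by omega) (cfg.hPcard k3 hk3)
  · intro x _
    fin_cases x
    · exact hRcard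
    · exact cfg.hPcard k1 hk1
    · exact cfg.hPcard k2 hk2
    · exact cfg.hPcard k3 hk3
  · intro x _ y _ hxy
    fin_cases x <;> fin_cases y <;>
      first
        | exact absurd rfl hxy
        | exact hblk k1 hk1
        | exact hblk k2 hk2
        | exact hblk k3 hk3
        | exact (hblk k1 hk1).symm
        | exact (hblk k2 hk2).symm
        | exact (hblk k3 hk3).symm
        | exact hPP k1 hk1 k2 hk2 h12
        | exact hPP k1 hk1 k3 hk3 h13
        | exact hPP k2 hk2 k3 hk3 h23
        | exact (hPP k1 hk1 k2 hk2 h12).symm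
        | exact (hPP k1 hk1 k3 hk3 h13).symm
        | exact (hPP k2 hk2 k3 hk3 h23).symm
  · decide

end Assemble

section Assemble2
variable {V : Type*} [Fintype V] [DecidableEq V] {G : SimpleGraph V}

lemma notMemBlock (cfg : FivePathConfig G) {k : Fin 5} (hk : k ∈ cfg.A1 ∪ cfg.A2)
    {m : Fin 5} (hmk : m ≠ k) : cfg.v m ∉ insert (cfg.v k) (cfg.U k) := by
  intro h
  rcases h with h | h
  · exact hmk (cfg.inj h)
  · exact vnotinU cfg hk m h

lemma memA1 (cfg : FivePathConfig G) {i j : Fin 5} (hA1 : cfg.A1 = {i, j}) :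
    i ∈ cfg.A1 ∧ j ∈ cfg.A1 :=
  ⟨by rw [hA1]; exact Finset.mem_insert_self i {j},
   by rw [hA1]; exact Finset.mem_insert_of_mem (Finset.mem_singleton_self j)⟩

lemma neA1A2 (cfg : FivePathConfig G) {i k : Fin 5} (hi : i ∈ cfg.A1) (hk : k ∈ cfg.A2) :
    i ≠ k := by
  intro h
  exact Finset.disjoint_left.mp cfg.hA hi (by rw [h]; exact hk)

lemma assembleGap2 (cfg : FivePathConfig G) (i m j k1 k2 : Fin 5)
    (hA1 : cfg.A1 = {i, j}) (hm : m ∈ cfg.A2) (hk1 : k1 ∈ cfg.A2) (hk2 : k2 ∈ cfg.A2)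
    (hij : i ≠ j) (him : i ≠ m) (hmj : m ≠ j) (h12 : k1 ≠ k2) (hmk1 : m ≠ k1)
    (hmk2 : m ≠ k2) (hadj1 : G.Adj (cfg.v i) (cfg.v m)) (hadj2 : G.Adj (cfg.v m) (cfg.v j)) :
    HasDisjointPathCover G 17 := by
  obtain ⟨hiA1, hjA1⟩ := memA1 cfg hA1
  have hiA : i ∈ cfg.A1 ∪ cfg.A2 := Finset.mem_union_left _ hiA1
  have hjA : j ∈ cfg.A1 ∪ cfg.A2 := Finset.mem_union_left _ hjA1
  have hmemA : ∀ k, k ∈ cfg.A2 → k ∈ cfg.A1 ∪ cfg.A2 := fun k hk => Finset.mem_union_right _ hk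
  obtain ⟨L, hLpath, hLcard, hLsub⟩ := longbridge cfg hiA hjA him hmj hij hadj1 hadj2
  have hblk : ∀ k, k ∈ cfg.A2 → k ≠ m → Disjoint L.verts (cfg.P k).verts := by
    intro k hk hkm
    refine Set.disjoint_of_subset hLsub (cfg.hPverts k hk) ?_
    rw [Set.insert_eq, Set.disjoint_union_left, Set.disjoint_singleton_left]
    refine ⟨notMemBlock cfg (hmemA k hk) (Ne.symm hkm), ?_⟩
    exact Disjoint.union_left (blockDisj cfg hiA (hmemA k hk) (neA1A2 cfg hiA1 hk))
      (blockDisj cfg hjA (hmemA k hk) (neA1A2 cfg hjA1 hk))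
  have hPP : Disjoint (cfg.P k1).verts (cfg.P k2).verts :=
    Set.disjoint_of_subset (cfg.hPverts k1 hk1) (cfg.hPverts k2 hk2)
      (blockDisj cfg (hmemA k1 hk1) (hmemA k2 hk2) h12)
  apply coverLemma G (Finset.univ : Finset (Fin 3)) ![L, cfg.P k1, cfg.P k2] ![7, 5, 5] 17
  · intro x _
    fin_cases x
    · exact hLpath
    · exact cfg.hPpath k1 hk1
    · exact cfg.hPpath k2 hk2
  · intro x _
    fin_cases x
    · exact le_trans (by omega) hLcard
    · exact le_trans (by omega) (cfg.hPcard k1 hk1)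
    · exact le_trans (by omega) (cfg.hPcard k2 hk2)
  · intro x _
    fin_cases x
    · exact hLcard
    · exact cfg.hPcard k1 hk1
    · exact cfg.hPcard k2 hk2
  · intro x _ y _ hxy
    fin_cases x <;> fin_cases y <;>
      first
        | exact absurd rfl hxy
        | exact hblk k1 hk1 (Ne.symm hmk1)
        | exact hblk k2 hk2 (Ne.symm hmk2)
        | exact (hblk k1 hk1 (Ne.symm hmk1)).symm
        | exact (hblk k2 hk2 (Ne.symm hmk2)).symm
        | exact hPP
        | exact hPP.symm
  · decide

lemma assembleFar (cfg : FivePathConfig G) (i i' j' j k : Fin 5)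
    (hA1 : cfg.A1 = {i, j}) (hi' : i' ∈ cfg.A2) (hj' : j' ∈ cfg.A2) (hk : k ∈ cfg.A2)
    (hij : i ≠ j) (hi'j' : i' ≠ j') (hi'k : i' ≠ k) (hj'k : j' ≠ k)
    (hadj1 : G.Adj (cfg.v i) (cfg.v i')) (hadj2 : G.Adj (cfg.v j') (cfg.v j)) :
    HasDisjointPathCover G 17 := by
  obtain ⟨hiA1, hjA1⟩ := memA1 cfg hA1
  have hiA : i ∈ cfg.A1 ∪ cfg.A2 := Finset.mem_union_left _ hiA1
  have hjA : j ∈ cfg.A1 ∪ cfg.A2 := Finset.mem_union_left _ hjA1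
  have hmemA : ∀ l, l ∈ cfg.A2 → l ∈ cfg.A1 ∪ cfg.A2 := fun l hl => Finset.mem_union_right _ hl
  have hii' : i ≠ i' := neA1A2 cfg hiA1 hi'
  have hij' : i ≠ j' := neA1A2 cfg hiA1 hj'
  have hik : i ≠ k := neA1A2 cfg hiA1 hk
  have hji' : j ≠ i' := neA1A2 cfg hjA1 hi'
  have hjj' : j ≠ j' := neA1A2 cfg hjA1 hj'
  have hjk : j ≠ k := neA1A2 cfg hjA1 hk
  obtain ⟨R1, hR1path, hR1card, hR1sub⟩ := bridge cfg hiA (hmemA i' hi') hii' hadj1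
  obtain ⟨R2, hR2path, hR2card, hR2sub⟩ := bridge cfg (hmemA j' hj') hjA (Ne.symm hjj') hadj2
  have hRR : Disjoint R1.verts R2.verts := by
    refine Set.disjoint_of_subset hR1sub hR2sub ?_
    refine Disjoint.union_left ?_ ?_ <;> refine Disjoint.union_right ?_ ?_
    · exact blockDisj cfg hiA (hmemA j' hj') hij'
    · exact blockDisj cfg hiA hjA hij
    · exact blockDisj cfg (hmemA i' hi') (hmemA j' hj') hi'j'
    · exact blockDisj cfg (hmemA i' hi') hjA (Ne.symm hji')
  have hR1P : Disjoint R1.verts (cfg.P k).verts := by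
    refine Set.disjoint_of_subset hR1sub (cfg.hPverts k hk) ?_
    exact Disjoint.union_left (blockDisj cfg hiA (hmemA k hk) hik)
      (blockDisj cfg (hmemA i' hi') (hmemA k hk) hi'k)
  have hR2P : Disjoint R2.verts (cfg.P k).verts := by
    refine Set.disjoint_of_subset hR2sub (cfg.hPverts k hk) ?_
    exact Disjoint.union_left (blockDisj cfg (hmemA j' hj') (hmemA k hk) hj'k)
      (blockDisj cfg hjA (hmemA k hk) hjk)
  apply coverLemma G (Finset.univ : Finset (Fin 3)) ![R1, R2, cfg.P k] ![6, 6, 5] 17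
  · intro x _
    fin_cases x
    · exact hR1path
    · exact hR2path
    · exact cfg.hPpath k hk
  · intro x _
    fin_cases x
    · exact le_trans (by omega) hR1card
    · exact le_trans (by omega) hR2card
    · exact le_trans (by omega) (cfg.hPcard k hk)
  · intro x _
    fin_cases x
    · exact hR1card
    · exact hR2card
    · exact cfg.hPcard k hk
  · intro x _ y _ hxy
    fin_cases x <;> fin_cases y <;>
      first
        | exact absurd rfl hxy
        | exact hRR
        | exact hRR.symm
        | exact hR1P
        | exact hR1P.symm
        | exact hR2P
        | exact hR2P.symm
  · decide

end Assemble2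

section Main
variable {V : Type*} [Fintype V] [DecidableEq V] {G : SimpleGraph V}

lemma coverA2 (cfg : FivePathConfig G) (N : ℕ) (hN : N ≤ 5 * cfg.A2.card) :
    HasDisjointPathCover G N := by
  apply coverLemma G cfg.A2 cfg.P (fun _ => 5) N
  · exact fun k hk => cfg.hPpath k hk
  · intro k hk; exact le_trans (by omega) (cfg.hPcard k hk)
  · intro k hk; exact cfg.hPcard k hk
  · intro k hk l hl hkl
    exact Set.disjoint_of_subset (cfg.hPverts k hk) (cfg.hPverts l hl)
      (blockDisj cfg (Finset.mem_union_right _ hk) (Finset.mem_union_right _ hl) hkl)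
  · rw [Finset.sum_const, smul_eq_mul]; omega

theorem stmt10' (cfg : FivePathConfig G) :
    (cfg.A2.card = 5 → HasDisjointPathCover G 25) ∧
    (cfg.A2.card = 4 → HasDisjointPathCover G 20) ∧
    (cfg.A2.card = 3 → HasDisjointPathCover G 15 ∧
      (cfg.A1 ∪ cfg.A2 = Finset.univ → HasDisjointPathCover G 17)) := by
  refine ⟨fun h5 => coverA2 cfg 25 (by omega), fun h4 => coverA2 cfg 20 (by omega), fun h3 => ?_⟩
  refine ⟨coverA2 cfg 15 (by omega), fun huniv => ?_⟩
  have a01 : G.Adj (cfg.v 0) (cfg.v 1) := cfg.adj 0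
  have a12 : G.Adj (cfg.v 1) (cfg.v 2) := cfg.adj 1
  have a23 : G.Adj (cfg.v 2) (cfg.v 3) := cfg.adj 2
  have a34 : G.Adj (cfg.v 3) (cfg.v 4) := cfg.adj 3
  have hA1card : cfg.A1.card = 2 := by
    have hcu := Finset.card_union_of_disjoint cfg.hA
    rw [huniv] at hcu
    simp only [Finset.card_univ, Fintype.card_fin] at hcu
    omega
  obtain ⟨i, j, hij, hA1⟩ := Finset.card_eq_two.mp hA1card
  have hA2eq : cfg.A2 = Finset.univ \ cfg.A1 := by
    rw [← huniv, Finset.union_sdiff_cancel_left cfg.hA]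
  rw [hA1] at hA2eq
  fin_cases i <;> fin_cases j
  · exact absurd rfl hij
  · exact assembleAdj cfg 0 1 2 3 4 hA1 (by decide) (by decide) (by decide) (by decide)
      (by rw [hA2eq]; decide) (by rw [hA2eq]; decide) (by rw [hA2eq]; decide) a01
  · exact assembleGap2 cfg 0 1 2 3 4 hA1 (by rw [hA2eq]; decide) (by rw [hA2eq]; decide)
      (by rw [hA2eq]; decide) (by decide) (by decide) (by decide) (by decide) (by decide)
      (by decide) a01 a12
  · exact assembleFar cfg 0 1 2 3 4 hA1 (by rw [hA2eq]; decide) (by rw [hA2eq]; decide)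
      (by rw [hA2eq]; decide) (by decide) (by decide) (by decide) (by decide) a01 a23
  · exact assembleFar cfg 0 1 3 4 2 hA1 (by rw [hA2eq]; decide) (by rw [hA2eq]; decide)
      (by rw [hA2eq]; decide) (by decide) (by decide) (by decide) (by decide) a01 a34
  · exact assembleAdj cfg 1 0 2 3 4 hA1 (by decide) (by decide) (by decide) (by decide)
      (by rw [hA2eq]; decide) (by rw [hA2eq]; decide) (by rw [hA2eq]; decide) a01.symm
  · exact absurd rfl hij
  · exact assembleAdj cfg 1 2 0 3 4 hA1 (by decide) (by decide) (by decide) (by decide)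
      (by rw [hA2eq]; decide) (by rw [hA2eq]; decide) (by rw [hA2eq]; decide) a12
  · exact assembleGap2 cfg 1 2 3 0 4 hA1 (by rw [hA2eq]; decide) (by rw [hA2eq]; decide)
      (by rw [hA2eq]; decide) (by decide) (by decide) (by decide) (by decide) (by decide)
      (by decide) a12 a23
  · exact assembleFar cfg 1 2 3 4 0 hA1 (by rw [hA2eq]; decide) (by rw [hA2eq]; decide)
      (by rw [hA2eq]; decide) (by decide) (by decide) (by decide) (by decide) a12 a34
  · exact assembleGap2 cfg 2 1 0 3 4 hA1 (by rw [hA2eq]; decide) (by rw [hA2eq]; decide)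
      (by rw [hA2eq]; decide) (by decide) (by decide) (by decide) (by decide) (by decide)
      (by decide) a12.symm a01.symm
  · exact assembleAdj cfg 2 1 0 3 4 hA1 (by decide) (by decide) (by decide) (by decide)
      (by rw [hA2eq]; decide) (by rw [hA2eq]; decide) (by rw [hA2eq]; decide) a12.symm
  · exact absurd rfl hij
  · exact assembleAdj cfg 2 3 0 1 4 hA1 (by decide) (by decide) (by decide) (by decide)
      (by rw [hA2eq]; decide) (by rw [hA2eq]; decide) (by rw [hA2eq]; decide) a23
  · exact assembleGap2 cfg 2 3 4 0 1 hA1 (by rw [hA2eq]; decide) (by rw [hA2eq]; decide)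
      (by rw [hA2eq]; decide) (by decide) (by decide) (by decide) (by decide) (by decide)
      (by decide) a23 a34
  · exact assembleFar cfg 3 2 1 0 4 hA1 (by rw [hA2eq]; decide) (by rw [hA2eq]; decide)
      (by rw [hA2eq]; decide) (by decide) (by decide) (by decide) (by decide) a23.symm a01.symm
  · exact assembleGap2 cfg 3 2 1 0 4 hA1 (by rw [hA2eq]; decide) (by rw [hA2eq]; decide)
      (by rw [hA2eq]; decide) (by decide) (by decide) (by decide) (by decide) (by decide)
      (by decide) a23.symm a12.symm
  · exact assembleAdj cfg 3 2 0 1 4 hA1 (by decide) (by decide) (by decide) (by decide)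
      (by rw [hA2eq]; decide) (by rw [hA2eq]; decide) (by rw [hA2eq]; decide) a23.symm
  · exact absurd rfl hij
  · exact assembleAdj cfg 3 4 0 1 2 hA1 (by decide) (by decide) (by decide) (by decide)
      (by rw [hA2eq]; decide) (by rw [hA2eq]; decide) (by rw [hA2eq]; decide) a34
  · exact assembleFar cfg 4 3 1 0 2 hA1 (by rw [hA2eq]; decide) (by rw [hA2eq]; decide)
      (by rw [hA2eq]; decide) (by decide) (by decide) (by decide) (by decide) a34.symm a01.symm
  · exact assembleFar cfg 4 3 2 1 0 hA1 (by rw [hA2eq]; decide) (by rw [hA2eq]; decide)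
      (by rw [hA2eq]; decide) (by decide) (by decide) (by decide) (by decide) a34.symm a12.symm
  · exact assembleGap2 cfg 4 3 2 0 1 hA1 (by rw [hA2eq]; decide) (by rw [hA2eq]; decide)
      (by rw [hA2eq]; decide) (by decide) (by decide) (by decide) (by decide) (by decide)
      (by decide) a34.symm a23.symm
  · exact assembleAdj cfg 4 3 0 1 2 hA1 (by decide) (by decide) (by decide) (by decide)
      (by rw [hA2eq]; decide) (by rw [hA2eq]; decide) (by rw [hA2eq]; decide) a34.symm
  · exact absurd rfl hij

end Main

/-- a 5-path-center configuration yields vertex-disjoint `4⁺`-paths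
covering at least 25 vertices if `|A2| = 5`, at least 20 if `|A2| = 4`, and at least 15
if `|A2| = 3` — at least 17 in the latter case when moreover `A1 ∪ A2 = {1,…,5}`. -/
theorem stmt10 {V : Type*} [Fintype V] [DecidableEq V] (G : SimpleGraph V)
    (cfg : FivePathConfig G) :
    (cfg.A2.card = 5 → HasDisjointPathCover G 25) ∧
    (cfg.A2.card = 4 → HasDisjointPathCover G 20) ∧
    (cfg.A2.card = 3 → HasDisjointPathCover G 15 ∧
      (cfg.A1 ∪ cfg.A2 = Finset.univ → HasDisjointPathCover G 17)) := by
  exact stmt10' cfg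
end

section
/- In a finite simple graph G, consider either an edge-center configuration with A2 = {1,2}, or a 5-path-center configuration with |A2| ≥ 2. Then G contains a collection of vertex-disjoint paths, each of order at least 4, covering at least 10 vertices in total. -/
open SimpleGraph

/-- An edge-center configuration in `G`: an edge `{v 0, v 1}` of `G` (indices `0,1`
correspond to `v1,v2`), disjoint index sets `A1` (1-anchors) and `A2` (2-anchors),
pairwise disjoint sets `U i` avoiding the `v i`'s, for each `i ∈ A1 ∪ A2` a path `Q i`
of order at least 3 with endpoint `v i` and all other vertices in `U i`, and for each
`i ∈ A2` additionally a path `P i` of order at least 5 with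
`v i ∈ V(P i) ⊆ {v i} ∪ U i`. -/
structure EdgeCenterConfig {V : Type*} (G : SimpleGraph V) where
  v : Fin 2 → V
  inj : Function.Injective v
  adj : G.Adj (v 0) (v 1)
  A1 : Finset (Fin 2)
  A2 : Finset (Fin 2)
  hA : Disjoint A1 A2
  U : Fin 2 → Set V
  hUv : ∀ i ∈ A1 ∪ A2, Disjoint (U i) (Set.range v)
  hUdisj : ∀ i ∈ A1 ∪ A2, ∀ j ∈ A1 ∪ A2, i ≠ j → Disjoint (U i) (U j)
  Q : Fin 2 → G.Subgraph
  hQpath : ∀ i ∈ A1 ∪ A2, IsPathSubgraph (Q i)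
  hQcard : ∀ i ∈ A1 ∪ A2, 3 ≤ (Q i).verts.ncard
  hQend : ∀ i ∈ A1 ∪ A2, IsPathEndpoint (Q i) (v i)
  hQverts : ∀ i ∈ A1 ∪ A2, (Q i).verts ⊆ insert (v i) (U i)
  P : Fin 2 → G.Subgraph
  hPpath : ∀ i ∈ A2, IsPathSubgraph (P i)
  hPcard : ∀ i ∈ A2, 5 ≤ (P i).verts.ncard
  hPv : ∀ i ∈ A2, v i ∈ (P i).verts
  hPverts : ∀ i ∈ A2, (P i).verts ⊆ insert (v i) (U i)

lemma verts_disj_aux {V : Type*} {n : ℕ} (v : Fin n → V) (inj : Function.Injective v)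
    (U : Fin n → Set V) {i j : Fin n} (hij : i ≠ j)
    (hUi : Disjoint (U i) (Set.range v)) (hUj : Disjoint (U j) (Set.range v))
    (hU : Disjoint (U i) (U j))
    {S T : Set V} (hS : S ⊆ insert (v i) (U i)) (hT : T ⊆ insert (v j) (U j)) :
    Disjoint S T := by
  rw [Set.disjoint_left]
  intro x hxS hxT
  rcases hS hxS with rfl | hxi
  · rcases hT hxT with h | hxj
    · exact hij (inj h)
    · exact (Set.disjoint_left.mp hUj) hxj ⟨i, rfl⟩
  · rcases hT hxT with rfl | hxj
    · exact (Set.disjoint_left.mp hUi) hxi ⟨j, rfl⟩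
    · exact (Set.disjoint_left.mp hU) hxi hxj

lemma two_paths_cover {V : Type*} [Fintype V] (G : SimpleGraph V) (P P' : G.Subgraph)
    (h1 : IsPathSubgraph P) (h2 : IsPathSubgraph P')
    (c1 : 5 ≤ P.verts.ncard) (c2 : 5 ≤ P'.verts.ncard)
    (hd : Disjoint P.verts P'.verts) : HasDisjointPathCover G 10 := by
  refine ⟨{P, P'}, ?_, ?_, ?_⟩
  · intro Q hQ
    rcases hQ with rfl | rfl
    · exact ⟨h1, by omega⟩
    · exact ⟨h2, by omega⟩
  · intro a ha b hb hab
    rcases ha with rfl | rfl <;> rcases hb with rfl | rfl <;>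
      first
        | exact absurd rfl hab
        | exact hd
        | exact hd.symm
  · have : (⋃ Q ∈ ({P, P'} : Set G.Subgraph), Q.verts) = P.verts ∪ P'.verts :=
      Set.biUnion_pair _ _ _
    rw [this, Set.ncard_union_eq hd (Set.toFinite _) (Set.toFinite _)]
    omega

/-- an edge-center configuration with `A2 = {1, 2}` (i.e. `A2` is all of
`Fin 2`), or a 5-path-center configuration with `|A2| ≥ 2`, yields vertex-disjoint
`4⁺`-paths covering at least 10 vertices. -/
theorem stmt11 {V : Type*} [Fintype V] [DecidableEq V] (G : SimpleGraph V)
    (hyp : (∃ cfg : EdgeCenterConfig G, cfg.A2 = Finset.univ) ∨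
           (∃ cfg : FivePathConfig G, 2 ≤ cfg.A2.card)) :
    HasDisjointPathCover G 10 := by
  rcases hyp with ⟨cfg, hA2⟩ | ⟨cfg, hA2⟩
  · have h0 : (0 : Fin 2) ∈ cfg.A2 := hA2 ▸ Finset.mem_univ _
    have h1 : (1 : Fin 2) ∈ cfg.A2 := hA2 ▸ Finset.mem_univ _
    have h0' : (0 : Fin 2) ∈ cfg.A1 ∪ cfg.A2 := Finset.mem_union_right _ h0
    have h1' : (1 : Fin 2) ∈ cfg.A1 ∪ cfg.A2 := Finset.mem_union_right _ h1
    exact two_paths_cover G (cfg.P 0) (cfg.P 1) (cfg.hPpath 0 h0) (cfg.hPpath 1 h1)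
      (cfg.hPcard 0 h0) (cfg.hPcard 1 h1)
      (verts_disj_aux cfg.v cfg.inj cfg.U (by decide) (cfg.hUv 0 h0') (cfg.hUv 1 h1')
        (cfg.hUdisj 0 h0' 1 h1' (by decide)) (cfg.hPverts 0 h0) (cfg.hPverts 1 h1))
  · obtain ⟨i, hi, j, hj, hij⟩ := Finset.one_lt_card.mp (by omega : 1 < cfg.A2.card)
    have hi' : i ∈ cfg.A1 ∪ cfg.A2 := Finset.mem_union_right _ hi
    have hj' : j ∈ cfg.A1 ∪ cfg.A2 := Finset.mem_union_right _ hj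
    exact two_paths_cover G (cfg.P i) (cfg.P j) (cfg.hPpath i hi) (cfg.hPpath j hj)
      (cfg.hPcard i hi) (cfg.hPcard j hj)
      (verts_disj_aux cfg.v cfg.inj cfg.U hij (cfg.hUv i hi') (cfg.hUv j hj')
        (cfg.hUdisj i hi' j hj' hij) (cfg.hPverts i hi) (cfg.hPverts j hj))
end

section
/- Consider a 5-path-center configuration in a finite simple graph G with |A2| = 2 and |A1| = 1. Then G contains a collection of vertex-disjoint paths, each of order at least 4, covering at least 11 vertices in total; and if moreover A2 ∈ {{1,2}, {4,5}, {1,5}}, then G contains such a collection covering at least 14 vertices in total. -/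
open SimpleGraph

section Helpers
variable {V : Type*} {G : SimpleGraph V}

lemma neighborSet_empty_of_not_mem {H : G.Subgraph} {v : V} (h : v ∉ H.verts) :
    H.neighborSet v = ∅ :=
  Set.eq_empty_of_forall_notMem fun _ hw => h hw.fst_mem

lemma nbhd_subset (H : G.Subgraph) (v : V) : H.neighborSet v ⊆ H.verts :=
  fun _ hw => hw.snd_mem

lemma path_struct {P : G.Subgraph} (hP : IsPathSubgraph P) (h2 : 2 ≤ P.verts.ncard) :
    ({v ∈ P.verts | subDeg P v = 1}).ncard = 2 ∧
      ∀ v ∈ P.verts, subDeg P v = 1 ∨ subDeg P v = 2 := by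
  rcases hP.2 with ⟨v, hv⟩ | h
  · rw [hv, Set.ncard_singleton] at h2; omega
  · exact h

lemma extend_path [Fintype V] {Q : G.Subgraph} {a b : V}
    (hQ : IsPathSubgraph Q) (hcard : 2 ≤ Q.verts.ncard)
    (hend : IsPathEndpoint Q a) (hab : G.Adj a b) (hb : b ∉ Q.verts) :
    IsPathSubgraph (Q ⊔ G.subgraphOfAdj hab) ∧
      (Q ⊔ G.subgraphOfAdj hab).verts = insert b Q.verts ∧
      IsPathEndpoint (Q ⊔ G.subgraphOfAdj hab) b := by
  classical
  obtain ⟨hE2, hdegQ⟩ := path_struct hQ hcard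
  set R := Q ⊔ G.subgraphOfAdj hab with hR
  have haQ : a ∈ Q.verts := hend.1
  have hverts : R.verts = insert b Q.verts := by
    rw [hR, Subgraph.verts_sup, subgraphOfAdj_verts]
    ext x
    simp only [Set.mem_union, Set.mem_insert_iff, Set.mem_singleton_iff]
    constructor
    · rintro (h | rfl | rfl) <;> tauto
    · rintro (rfl | h) <;> tauto
  have hnb : ∀ v, R.neighborSet v = Q.neighborSet v ∪ (G.subgraphOfAdj hab).neighborSet v :=
    fun v => Subgraph.neighborSet_sup v
  have hdega : subDeg R a = 2 := by
    rw [subDeg, hnb, neighborSet_fst_subgraphOfAdj]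
    have hbn : b ∉ Q.neighborSet a := fun h => hb (nbhd_subset Q a h)
    rw [Set.union_singleton, Set.ncard_insert_of_notMem hbn (Set.toFinite _)]
    have := hend.2
    rw [subDeg] at this
    omega
  have hdegb : subDeg R b = 1 := by
    rw [subDeg, hnb, neighborSet_snd_subgraphOfAdj,
      neighborSet_empty_of_not_mem hb, Set.empty_union, Set.ncard_singleton]
  have hdego : ∀ v, v ≠ a → v ≠ b → subDeg R v = subDeg Q v := by
    intro v hva hvb
    rw [subDeg, hnb, neighborSet_subgraphOfAdj_of_ne_of_ne hab hva hvb, Set.union_empty]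
    rfl
  have hEset : {v ∈ R.verts | subDeg R v = 1}
      = insert b ({v ∈ Q.verts | subDeg Q v = 1} \ {a}) := by
    ext v
    constructor
    · rintro ⟨hvR, hd⟩
      rw [hverts] at hvR
      rcases hvR with rfl | hvQ
      · exact Set.mem_insert _ _
      · have hvb : v ≠ b := fun h => hb (h ▸ hvQ)
        have hva : v ≠ a := by
          rintro rfl
          rw [hdega] at hd; omega
        exact Set.mem_insert_of_mem _ ⟨⟨hvQ, by rw [← hdego v hva hvb]; exact hd⟩, hva⟩
    · intro hv
      rcases Set.mem_insert_iff.1 hv with rfl | hv'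
      · exact ⟨by rw [hverts]; exact Set.mem_insert _ _, hdegb⟩
      · obtain ⟨⟨hvQ, hd⟩, hva⟩ := hv'
        have hvb : v ≠ b := fun h => hb (h ▸ hvQ)
        exact ⟨by rw [hverts]; exact Set.mem_insert_of_mem _ hvQ,
          by rw [hdego v hva hvb]; exact hd⟩
  have hcount : ({v ∈ R.verts | subDeg R v = 1}).ncard = 2 := by
    rw [hEset]
    have haE : a ∈ {v ∈ Q.verts | subDeg Q v = 1} := ⟨haQ, hend.2⟩
    have hbn : b ∉ {v ∈ Q.verts | subDeg Q v = 1} \ {a} := fun h => hb h.1.1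
    rw [Set.ncard_insert_of_notMem hbn (Set.toFinite _),
      Set.ncard_diff_singleton_of_mem haE, hE2]
  have hconn : R.Connected := by
    apply Subgraph.connected_sup hQ.1.preconnected (Subgraph.subgraphOfAdj_connected hab).preconnected
    rw [Subgraph.verts_inf, subgraphOfAdj_verts]
    exact ⟨a, haQ, Set.mem_insert _ _⟩
  refine ⟨⟨hconn, Or.inr ⟨hcount, ?_⟩⟩, hverts,
    ⟨by rw [hverts]; exact Set.mem_insert _ _, hdegb⟩⟩
  intro v hv
  rw [hverts] at hv
  rcases hv with rfl | hvQ
  · exact Or.inl hdegb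
  · by_cases hva : v = a
    · subst hva; exact Or.inr hdega
    · have hvb : v ≠ b := fun h => hb (h ▸ hvQ)
      rw [hdego v hva hvb]; exact hdegQ v hvQ


lemma join_paths [Fintype V] {P Q : G.Subgraph} {x : V}
    (hP : IsPathSubgraph P) (hQ : IsPathSubgraph Q)
    (hcP : 2 ≤ P.verts.ncard) (hcQ : 2 ≤ Q.verts.ncard)
    (heP : IsPathEndpoint P x) (heQ : IsPathEndpoint Q x)
    (hint : P.verts ∩ Q.verts ⊆ {x}) :
    IsPathSubgraph (P ⊔ Q) := by
  classical
  obtain ⟨hEP, hdP⟩ := path_struct hP hcP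
  obtain ⟨hEQ, hdQ⟩ := path_struct hQ hcQ
  have hnotQ : ∀ v ∈ P.verts, v ≠ x → v ∉ Q.verts := fun v hv hvx hvQ => hvx (hint ⟨hv, hvQ⟩)
  have hnotP : ∀ v ∈ Q.verts, v ≠ x → v ∉ P.verts := fun v hv hvx hvP => hvx (hint ⟨hvP, hv⟩)
  have hnb : ∀ v, (P ⊔ Q).neighborSet v = P.neighborSet v ∪ Q.neighborSet v :=
    fun v => Subgraph.neighborSet_sup v
  obtain ⟨p, hp⟩ := Set.ncard_eq_one.mp heP.2
  obtain ⟨q, hq⟩ := Set.ncard_eq_one.mp heQ.2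
  have hpmem : p ∈ P.neighborSet x := by rw [hp]; rfl
  have hqmem : q ∈ Q.neighborSet x := by rw [hq]; rfl
  have hpP : p ∈ P.verts := nbhd_subset P x hpmem
  have hqQ : q ∈ Q.verts := nbhd_subset Q x hqmem
  have hpx : p ≠ x := by rintro rfl; exact (P.adj_sub hpmem).ne rfl
  have hqx : q ≠ x := by rintro rfl; exact (Q.adj_sub hqmem).ne rfl
  have hpq : p ≠ q := by
    rintro rfl
    exact hpx (hint ⟨hpP, hqQ⟩)
  have hdx : subDeg (P ⊔ Q) x = 2 := by
    rw [subDeg, hnb, hp, hq, Set.singleton_union]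
    exact Set.ncard_pair hpq
  have hdPside : ∀ v ∈ P.verts, v ≠ x → subDeg (P ⊔ Q) v = subDeg P v := by
    intro v hv hvx
    rw [subDeg, hnb, neighborSet_empty_of_not_mem (hnotQ v hv hvx), Set.union_empty]
    rfl
  have hdQside : ∀ v ∈ Q.verts, v ≠ x → subDeg (P ⊔ Q) v = subDeg Q v := by
    intro v hv hvx
    rw [subDeg, hnb, neighborSet_empty_of_not_mem (hnotP v hv hvx), Set.empty_union]
    rfl
  have hEset : {v ∈ (P ⊔ Q).verts | subDeg (P ⊔ Q) v = 1}
      = ({v ∈ P.verts | subDeg P v = 1} \ {x}) ∪ ({v ∈ Q.verts | subDeg Q v = 1} \ {x}) := by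
    ext v
    constructor
    · rintro ⟨hv, hd⟩
      have hvx : v ≠ x := by
        rintro rfl; rw [hdx] at hd; omega
      have hv' : v ∈ P.verts ∪ Q.verts := by rw [← Subgraph.verts_sup]; exact hv
      rcases hv' with hvP | hvQ2
      · exact Or.inl ⟨⟨hvP, by rw [← hdPside v hvP hvx]; exact hd⟩, hvx⟩
      · exact Or.inr ⟨⟨hvQ2, by rw [← hdQside v hvQ2 hvx]; exact hd⟩, hvx⟩
    · rintro (⟨⟨hv, hd⟩, hvx⟩ | ⟨⟨hv, hd⟩, hvx⟩)
      · have hvx' : v ≠ x := fun h => hvx (h ▸ rfl)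
        refine ⟨?_, by rw [hdPside v hv hvx']; exact hd⟩
        rw [Subgraph.verts_sup]; exact Or.inl hv
      · have hvx' : v ≠ x := fun h => hvx (h ▸ rfl)
        refine ⟨?_, by rw [hdQside v hv hvx']; exact hd⟩
        rw [Subgraph.verts_sup]; exact Or.inr hv
  have hcount : ({v ∈ (P ⊔ Q).verts | subDeg (P ⊔ Q) v = 1}).ncard = 2 := by
    rw [hEset]
    have hxP : x ∈ {v ∈ P.verts | subDeg P v = 1} := ⟨heP.1, heP.2⟩
    have hxQ : x ∈ {v ∈ Q.verts | subDeg Q v = 1} := ⟨heQ.1, heQ.2⟩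
    have hdisj : Disjoint ({v ∈ P.verts | subDeg P v = 1} \ {x})
        ({v ∈ Q.verts | subDeg Q v = 1} \ {x}) := by
      rw [Set.disjoint_left]
      rintro y ⟨⟨hyP, _⟩, hyx⟩ ⟨⟨hyQ, _⟩, _⟩
      exact hyx (hint ⟨hyP, hyQ⟩)
    rw [Set.ncard_union_eq hdisj (Set.toFinite _) (Set.toFinite _),
      Set.ncard_diff_singleton_of_mem hxP,
      Set.ncard_diff_singleton_of_mem hxQ, hEP, hEQ]
  have hconn : (P ⊔ Q).Connected := by
    apply Subgraph.connected_sup hP.1.preconnected hQ.1.preconnected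
    rw [Subgraph.verts_inf]
    exact ⟨x, heP.1, heQ.1⟩
  refine ⟨hconn, Or.inr ⟨hcount, ?_⟩⟩
  intro v hv
  have hv' : v ∈ P.verts ∪ Q.verts := by rw [← Subgraph.verts_sup]; exact hv
  by_cases hvx : v = x
  · subst hvx; exact Or.inr hdx
  · rcases hv' with hvP | hvQ2
    · rw [hdPside v hvP hvx]; exact hdP v hvP
    · rw [hdQside v hvQ2 hvx]; exact hdQ v hvQ2

lemma cover_two [Fintype V] {P1 P2 : G.Subgraph}
    (h1 : IsPathSubgraph P1) (h2 : IsPathSubgraph P2)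
    (c1 : 4 ≤ P1.verts.ncard) (c2 : 4 ≤ P2.verts.ncard)
    (d12 : Disjoint P1.verts P2.verts) {N : ℕ}
    (hN : N ≤ P1.verts.ncard + P2.verts.ncard) : HasDisjointPathCover G N := by
  unfold HasDisjointPathCover HasDisjointPathsCovering
  refine ⟨{P1, P2}, ?_, ?_, ?_⟩
  · rintro P (rfl | rfl)
    exacts [⟨h1, c1⟩, ⟨h2, c2⟩]
  · rintro P (rfl | rfl) R (rfl | rfl) hne
    · exact absurd rfl hne
    · exact d12
    · exact d12.symm
    · exact absurd rfl hne
  · have he : (⋃ P ∈ ({P1, P2} : Set G.Subgraph), P.verts) = P1.verts ∪ P2.verts := by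
      simp [Set.biUnion_insert]
    rw [he, Set.ncard_union_eq d12 (Set.toFinite _) (Set.toFinite _)]
    exact hN

lemma cover_three [Fintype V] {P1 P2 P3 : G.Subgraph}
    (h1 : IsPathSubgraph P1) (h2 : IsPathSubgraph P2) (h3 : IsPathSubgraph P3)
    (c1 : 4 ≤ P1.verts.ncard) (c2 : 4 ≤ P2.verts.ncard) (c3 : 4 ≤ P3.verts.ncard)
    (d12 : Disjoint P1.verts P2.verts) (d13 : Disjoint P1.verts P3.verts)
    (d23 : Disjoint P2.verts P3.verts) {N : ℕ}
    (hN : N ≤ P1.verts.ncard + P2.verts.ncard + P3.verts.ncard) :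
    HasDisjointPathCover G N := by
  unfold HasDisjointPathCover HasDisjointPathsCovering
  refine ⟨{P1, P2, P3}, ?_, ?_, ?_⟩
  · rintro P (rfl | rfl | rfl)
    exacts [⟨h1, c1⟩, ⟨h2, c2⟩, ⟨h3, c3⟩]
  · rintro P (rfl | rfl | rfl) R (rfl | rfl | rfl) hne
    · exact absurd rfl hne
    · exact d12
    · exact d13
    · exact d12.symm
    · exact absurd rfl hne
    · exact d23
    · exact d13.symm
    · exact d23.symm
    · exact absurd rfl hne
  · have he : (⋃ P ∈ ({P1, P2, P3} : Set G.Subgraph), P.verts)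
        = P1.verts ∪ (P2.verts ∪ P3.verts) := by
      simp [Set.biUnion_insert, Set.union_assoc]
    rw [he, Set.ncard_union_eq (Set.disjoint_union_right.mpr ⟨d12, d13⟩)
        (Set.toFinite _) (Set.toFinite _),
      Set.ncard_union_eq d23 (Set.toFinite _) (Set.toFinite _)]
    omega

end Helpers

/-- a 5-path-center configuration with `|A2| = 2` and `|A1| = 1` yields
vertex-disjoint `4⁺`-paths covering at least 11 vertices, and at least 14 if
`A2 ∈ {{1,2}, {4,5}, {1,5}}` (indices `{0,1}, {3,4}, {0,4}`). -/
theorem stmt12 {V : Type*} [Fintype V] [DecidableEq V] (G : SimpleGraph V)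
    (cfg : FivePathConfig G) (h2 : cfg.A2.card = 2) (h1 : cfg.A1.card = 1) :
    HasDisjointPathCover G 11 ∧
    ((cfg.A2 = ({0, 1} : Finset (Fin 5)) ∨ cfg.A2 = ({3, 4} : Finset (Fin 5)) ∨
        cfg.A2 = ({0, 4} : Finset (Fin 5))) →
      HasDisjointPathCover G 14) := by
  classical
  obtain ⟨j, hjA1⟩ := Finset.card_eq_one.mp h1
  obtain ⟨i1, i2, hi12, hA2⟩ := Finset.card_eq_two.mp h2
  have hjmem : j ∈ cfg.A1 := by rw [hjA1]; exact Finset.mem_singleton_self j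
  have hi1 : i1 ∈ cfg.A2 := by rw [hA2]; exact Finset.mem_insert_self _ _
  have hi2 : i2 ∈ cfg.A2 := by
    rw [hA2]; exact Finset.mem_insert_of_mem (Finset.mem_singleton_self _)
  have hjA2 : j ∉ cfg.A2 := fun h => Finset.disjoint_left.mp cfg.hA hjmem h
  have hjU : j ∈ cfg.A1 ∪ cfg.A2 := Finset.mem_union_left _ hjmem
  have memU : ∀ i ∈ cfg.A2, i ∈ cfg.A1 ∪ cfg.A2 := fun i h => Finset.mem_union_right _ h
  have key : ∀ a ∈ cfg.A1 ∪ cfg.A2, ∀ b ∈ cfg.A1 ∪ cfg.A2, a ≠ b →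
      Disjoint (insert (cfg.v a) (cfg.U a)) (insert (cfg.v b) (cfg.U b)) := by
    intro a ha b hb hab
    rw [Set.disjoint_left]
    rintro y (rfl | hy) (h | hy')
    · exact hab (cfg.inj h)
    · exact Set.disjoint_left.mp (cfg.hUv b hb) hy' ⟨a, rfl⟩
    · exact Set.disjoint_left.mp (cfg.hUv a ha) hy ⟨b, h.symm⟩
    · exact Set.disjoint_left.mp (cfg.hUdisj a ha b hb hab) hy hy'
  have adjv : ∀ a b : Fin 5, (a : ℕ) + 1 = (b : ℕ) → G.Adj (cfg.v a) (cfg.v b) := by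
    intro a b h
    have ha4 : (a : ℕ) < 4 := by omega
    have hadj := cfg.adj ⟨a, ha4⟩
    have e1 : (⟨(a : ℕ), ha4⟩ : Fin 4).castSucc = a := by
      ext; simp [Fin.castSucc, Fin.castAdd, Fin.castLE]
    have e2 : (⟨(a : ℕ), ha4⟩ : Fin 4).succ = b := by
      ext; simp [Fin.val_succ]; omega
    rwa [e1, e2] at hadj
  -- case A : a neighbor of j outside A2 gives a cover of 14
  have caseA : ∀ k : Fin 5, G.Adj (cfg.v j) (cfg.v k) → k ∉ cfg.A2 →
      HasDisjointPathCover G 14 := by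
    intro k hadj hkA2
    have hvkj : cfg.v k ≠ cfg.v j := hadj.ne'
    have hkQ : cfg.v k ∉ (cfg.Q j).verts := by
      intro h
      rcases cfg.hQverts j hjU h with h' | h'
      · exact hvkj h'
      · exact Set.disjoint_left.mp (cfg.hUv j hjU) h' ⟨k, rfl⟩
    obtain ⟨hRpath, hRverts, -⟩ := extend_path (cfg.hQpath j hjU)
      (le_trans (by norm_num) (cfg.hQcard j hjU)) (cfg.hQend j hjU) hadj hkQ
    set R := cfg.Q j ⊔ G.subgraphOfAdj hadj with hRdef
    have hRcard : 4 ≤ R.verts.ncard := by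
      rw [hRverts, Set.ncard_insert_of_notMem hkQ (Set.toFinite _)]
      have := cfg.hQcard j hjU
      omega
    have hRsub : R.verts ⊆ insert (cfg.v k) (insert (cfg.v j) (cfg.U j)) := by
      rw [hRverts]; exact Set.insert_subset_insert (cfg.hQverts j hjU)
    have hPd : ∀ i ∈ cfg.A2, Disjoint (cfg.P i).verts R.verts := by
      intro i hi
      have hij : j ≠ i := fun h => hjA2 (h ▸ hi)
      have hk1 : cfg.v k ∉ insert (cfg.v i) (cfg.U i) := by
        rintro (h | h)
        · exact hkA2 ((cfg.inj h) ▸ hi)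
        · exact Set.disjoint_left.mp (cfg.hUv i (memU i hi)) h ⟨k, rfl⟩
      refine Set.disjoint_left.mpr ?_
      intro y hy hyR
      have hyI : y ∈ insert (cfg.v i) (cfg.U i) := cfg.hPverts i hi hy
      rcases hRsub hyR with rfl | hyJ
      · exact hk1 hyI
      · exact Set.disjoint_left.mp (key i (memU i hi) j hjU (Ne.symm hij)) hyI hyJ
    have hPP : Disjoint (cfg.P i1).verts (cfg.P i2).verts :=
      (key i1 (memU i1 hi1) i2 (memU i2 hi2) hi12).mono
        (cfg.hPverts i1 hi1) (cfg.hPverts i2 hi2)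
    exact cover_three (cfg.hPpath i1 hi1) (cfg.hPpath i2 hi2) hRpath
      (le_trans (by norm_num) (cfg.hPcard i1 hi1))
      (le_trans (by norm_num) (cfg.hPcard i2 hi2)) hRcard
      hPP (hPd i1 hi1) (hPd i2 hi2)
      (by have := cfg.hPcard i1 hi1; have := cfg.hPcard i2 hi2; omega)
  -- case B : a neighbor k of j in A2; join Q j and Q k, use P of the other anchor
  have caseB : ∀ k : Fin 5, G.Adj (cfg.v j) (cfg.v k) → k ∈ cfg.A2 →
      ∀ i', i' ∈ cfg.A2 → i' ≠ k → HasDisjointPathCover G 11 := by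
    intro k hadj hk i' hi' hik
    have hkU : k ∈ cfg.A1 ∪ cfg.A2 := memU k hk
    have hjk : j ≠ k := fun h => hjA2 (h ▸ hk)
    have hvkj : cfg.v k ≠ cfg.v j := hadj.ne'
    have hkQ : cfg.v k ∉ (cfg.Q j).verts := by
      intro h
      rcases cfg.hQverts j hjU h with h' | h'
      · exact hvkj h'
      · exact Set.disjoint_left.mp (cfg.hUv j hjU) h' ⟨k, rfl⟩
    obtain ⟨hR1path, hR1verts, hR1end⟩ := extend_path (cfg.hQpath j hjU)
      (le_trans (by norm_num) (cfg.hQcard j hjU)) (cfg.hQend j hjU) hadj hkQ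
    set R1 := cfg.Q j ⊔ G.subgraphOfAdj hadj with hR1def
    have hR1card : 4 ≤ R1.verts.ncard := by
      rw [hR1verts, Set.ncard_insert_of_notMem hkQ (Set.toFinite _)]
      have := cfg.hQcard j hjU
      omega
    have hQQdisj : Disjoint (cfg.Q j).verts (cfg.Q k).verts :=
      (key j hjU k hkU hjk).mono (cfg.hQverts j hjU) (cfg.hQverts k hkU)
    have hint : R1.verts ∩ (cfg.Q k).verts ⊆ {cfg.v k} := by
      rintro y ⟨hy1, hy2⟩
      rw [hR1verts] at hy1
      rcases hy1 with rfl | hyQ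
      · rfl
      · exact absurd hy2 (Set.disjoint_left.mp hQQdisj hyQ)
    have hRpath : IsPathSubgraph (R1 ⊔ cfg.Q k) :=
      join_paths hR1path (cfg.hQpath k hkU) (by omega)
        (le_trans (by norm_num) (cfg.hQcard k hkU)) hR1end (cfg.hQend k hkU) hint
    have hRverts : (R1 ⊔ cfg.Q k).verts = R1.verts ∪ (cfg.Q k).verts :=
      Subgraph.verts_sup _ _
    have hRverts' : (R1 ⊔ cfg.Q k).verts = (cfg.Q j).verts ∪ (cfg.Q k).verts := by
      rw [hRverts, hR1verts, Set.insert_union]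
      exact Set.insert_eq_self.mpr (Set.mem_union_right _ (cfg.hQend k hkU).1)
    have hRcard : 6 ≤ (R1 ⊔ cfg.Q k).verts.ncard := by
      rw [hRverts', Set.ncard_union_eq hQQdisj (Set.toFinite _) (Set.toFinite _)]
      have := cfg.hQcard j hjU
      have := cfg.hQcard k hkU
      omega
    have hdisj : Disjoint (R1 ⊔ cfg.Q k).verts (cfg.P i').verts := by
      have hji' : j ≠ i' := fun h => hjA2 (h ▸ hi')
      refine Set.disjoint_left.mpr ?_
      intro y hy hyP
      have hyI : y ∈ insert (cfg.v i') (cfg.U i') := cfg.hPverts i' hi' hyP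
      rw [hRverts'] at hy
      rcases hy with hy | hy
      · exact Set.disjoint_left.mp (key j hjU i' (memU i' hi') hji')
          (cfg.hQverts j hjU hy) hyI
      · exact Set.disjoint_left.mp (key k hkU i' (memU i' hi') (Ne.symm hik))
          (cfg.hQverts k hkU hy) hyI
    exact cover_two hRpath (cfg.hPpath i' hi') (by omega)
      (le_trans (by norm_num) (cfg.hPcard i' hi')) hdisj
      (by have := cfg.hPcard i' hi'; omega)
  by_cases hex : ∃ k, G.Adj (cfg.v j) (cfg.v k) ∧ k ∉ cfg.A2
  · obtain ⟨k, hadj, hk⟩ := hex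
    have h14 := caseA k hadj hk
    refine ⟨?_, fun _ => h14⟩
    obtain ⟨Ps, ha, hb, hc⟩ := h14
    exact ⟨Ps, ha, hb, by omega⟩
  · push_neg at hex
    have hnbr : ∃ k, G.Adj (cfg.v j) (cfg.v k) := by
      fin_cases j
      · exact ⟨1, adjv 0 1 (by decide)⟩
      · exact ⟨0, (adjv 0 1 (by decide)).symm⟩
      · exact ⟨1, (adjv 1 2 (by decide)).symm⟩
      · exact ⟨2, (adjv 2 3 (by decide)).symm⟩
      · exact ⟨3, (adjv 3 4 (by decide)).symm⟩
    obtain ⟨k, hadj⟩ := hnbr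
    have hkA2 : k ∈ cfg.A2 := hex k hadj
    have hk12 : k = i1 ∨ k = i2 := by
      rw [hA2] at hkA2
      simpa using hkA2
    have h11 : HasDisjointPathCover G 11 := by
      rcases hk12 with rfl | rfl
      · exact caseB k hadj hkA2 i2 hi2 (Ne.symm hi12)
      · exact caseB k hadj hkA2 i1 hi1 hi12
    refine ⟨h11, fun hsp => ?_⟩
    exfalso
    rcases hsp with h | h | h <;> rw [h] at hjA2 hex <;> fin_cases j <;>
      first
      | exact hjA2 (by decide)
      | exact absurd (hex 1 (adjv 0 1 (by decide))) (by decide)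
      | exact absurd (hex 0 ((adjv 0 1 (by decide)).symm)) (by decide)
      | exact absurd (hex 2 (adjv 1 2 (by decide))) (by decide)
      | exact absurd (hex 1 ((adjv 1 2 (by decide)).symm)) (by decide)
      | exact absurd (hex 3 (adjv 2 3 (by decide))) (by decide)
      | exact absurd (hex 2 ((adjv 2 3 (by decide)).symm)) (by decide)
      | exact absurd (hex 4 (adjv 3 4 (by decide))) (by decide)
      | exact absurd (hex 3 ((adjv 3 4 (by decide)).symm)) (by decide)
end

section
/- Consider an edge-center configuration in a finite simple graph G with A2 = {1}. Then G contains a path of order at least 5; and if moreover A1 = {2}, then G contains a path of order at least 6. In particular, G contains vertex-disjoint paths of order at least 4 covering at least 5 (respectively, at least 6) vertices in total. -/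
open SimpleGraph

lemma path_props {V : Type*} {G : SimpleGraph V} {Q : G.Subgraph} (h : IsPathSubgraph Q)
    {v : V} (he : IsPathEndpoint Q v) :
    ({x ∈ Q.verts | subDeg Q x = 1}).ncard = 2 ∧
      ∀ x ∈ Q.verts, subDeg Q x = 1 ∨ subDeg Q x = 2 := by
  rcases h.2 with ⟨u, hu⟩ | h'
  · exfalso
    obtain ⟨w, hw⟩ : (Q.neighborSet v).Nonempty :=
      Set.nonempty_of_ncard_ne_zero (by rw [← subDeg, he.2]; omega)
    have hadj : Q.Adj v w := hw
    have hv : v = u := by have := he.1; rw [hu] at this; exact this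
    have hwv : w = u := by have := hadj.snd_mem; rw [hu] at this; exact this
    subst hv hwv; exact Q.loopless.irrefl _ hadj
  · exact h'

lemma concat_paths {V : Type*} [Fintype V] {G : SimpleGraph V}
    {Q0 Q1 : G.Subgraph} {v0 v1 : V} (hadj : G.Adj v0 v1)
    (h0 : IsPathSubgraph Q0) (h1 : IsPathSubgraph Q1)
    (e0 : IsPathEndpoint Q0 v0) (e1 : IsPathEndpoint Q1 v1)
    (hdisj : Disjoint Q0.verts Q1.verts) :
    ∃ R : G.Subgraph, IsPathSubgraph R ∧ R.verts = Q0.verts ∪ Q1.verts := by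
  classical
  set E := G.subgraphOfAdj hadj with hE
  set R := Q0 ⊔ E ⊔ Q1 with hR
  have hv1n0 : v1 ∉ Q0.verts := fun h => (Set.disjoint_left.mp hdisj h) e1.1
  have hv0n1 : v0 ∉ Q1.verts := fun h => (Set.disjoint_right.mp hdisj h) e0.1
  have hv01 : v0 ≠ v1 := hadj.ne
  have nsE : ∀ x y : V, y ∈ E.neighborSet x ↔ (x = v0 ∧ y = v1) ∨ (x = v1 ∧ y = v0) := by
    intro x y
    simp only [hE, Subgraph.mem_neighborSet, subgraphOfAdj_adj, Sym2.eq, Sym2.rel_iff',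
      Prod.mk.injEq, Prod.swap_prod_mk]
    tauto
  have nsQ : ∀ (Q : G.Subgraph) (x : V), x ∉ Q.verts → Q.neighborSet x = ∅ := by
    intro Q x hx
    ext y
    simp only [Subgraph.mem_neighborSet, Set.mem_empty_iff_false, iff_false]
    exact fun h => hx h.fst_mem
  have nsEempty : ∀ x : V, x ≠ v0 → x ≠ v1 → E.neighborSet x = ∅ := by
    intro x h1 h2
    ext y
    simp only [nsE, Set.mem_empty_iff_false, iff_false]
    tauto
  -- degrees of vertices other than v0, v1
  have deg0 : ∀ x ∈ Q0.verts, x ≠ v0 → (R.neighborSet x) = Q0.neighborSet x := by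
    intro x hx hxv
    have hx1 : x ∉ Q1.verts := Set.disjoint_left.mp hdisj hx
    have hxv1 : x ≠ v1 := fun h => hv1n0 (h ▸ hx)
    rw [hR]
    simp [Subgraph.neighborSet_sup, nsEempty x hxv hxv1, nsQ Q1 x hx1]
  have deg1 : ∀ x ∈ Q1.verts, x ≠ v1 → (R.neighborSet x) = Q1.neighborSet x := by
    intro x hx hxv
    have hx0 : x ∉ Q0.verts := Set.disjoint_right.mp hdisj hx
    have hxv0 : x ≠ v0 := fun h => hv0n1 (h ▸ hx)
    rw [hR]
    simp [Subgraph.neighborSet_sup, nsEempty x hxv0 hxv, nsQ Q0 x hx0]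
  have nsv0 : R.neighborSet v0 = insert v1 (Q0.neighborSet v0) := by
    ext y
    rw [hR]
    simp only [Subgraph.neighborSet_sup, Set.mem_union, nsE, Set.mem_insert_iff]
    constructor
    · rintro ((h | h) | h)
      · exact Or.inr h
      · rcases h with ⟨_, hy⟩ | ⟨h, _⟩
        · exact Or.inl hy
        · exact absurd h hv01
      · exact absurd h.fst_mem hv0n1
    · rintro (h | h)
      · exact Or.inl (Or.inr (Or.inl ⟨trivial, h⟩))
      · exact Or.inl (Or.inl h)
  have nsv1 : R.neighborSet v1 = insert v0 (Q1.neighborSet v1) := by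
    ext y
    rw [hR]
    simp only [Subgraph.neighborSet_sup, Set.mem_union, nsE, Set.mem_insert_iff]
    constructor
    · rintro ((h | h) | h)
      · exact absurd h.fst_mem hv1n0
      · rcases h with ⟨h, _⟩ | ⟨_, hy⟩
        · exact absurd h.symm hv01
        · exact Or.inl hy
      · exact Or.inr h
    · rintro (h | h)
      · exact Or.inl (Or.inr (Or.inr ⟨trivial, h⟩))
      · exact Or.inr h
  have degv0 : subDeg R v0 = 2 := by
    have hmem : v1 ∉ Q0.neighborSet v0 := fun h => hv1n0 h.snd_mem
    rw [subDeg, nsv0, Set.ncard_insert_of_notMem hmem (Set.toFinite _)]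
    have := e0.2
    rw [subDeg] at this
    omega
  have degv1 : subDeg R v1 = 2 := by
    have hmem : v0 ∉ Q1.neighborSet v1 := fun h => hv0n1 h.snd_mem
    rw [subDeg, nsv1, Set.ncard_insert_of_notMem hmem (Set.toFinite _)]
    have := e1.2
    rw [subDeg] at this
    omega
  have hverts : R.verts = Q0.verts ∪ Q1.verts := by
    ext x
    rw [hR]
    simp only [Subgraph.verts_sup, hE, subgraphOfAdj_verts, Set.mem_union, Set.mem_insert_iff,
      Set.mem_singleton_iff]
    constructor
    · rintro ((h | h | h) | h)
      · exact Or.inl h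
      · exact Or.inl (h ▸ e0.1)
      · exact Or.inr (h ▸ e1.1)
      · exact Or.inr h
    · tauto
  -- connectivity
  have c1 : (Q0 ⊔ E).Connected := by
    refine Subgraph.connected_sup h0.1.preconnected (Subgraph.subgraphOfAdj_connected hadj).preconnected ⟨v0, ?_⟩
    exact ⟨e0.1, Or.inl rfl⟩
  have conn : R.Connected := by
    refine Subgraph.connected_sup c1.preconnected h1.1.preconnected ⟨v1, ?_⟩
    exact ⟨Or.inr (Or.inr rfl), e1.1⟩
  -- degree-one vertices
  obtain ⟨hS0, hd0⟩ := path_props h0 e0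
  obtain ⟨hS1, hd1⟩ := path_props h1 e1
  obtain ⟨w0, hw0ne, hw0⟩ : ∃ w, w ≠ v0 ∧
      {x ∈ Q0.verts | subDeg Q0 x = 1} = {v0, w} := by
    obtain ⟨a, b, hab, hS⟩ := Set.ncard_eq_two.mp hS0
    have hv0S : v0 ∈ ({a, b} : Set V) := hS ▸ ⟨e0.1, e0.2⟩
    rcases hv0S with h | h
    · exact ⟨b, fun hb => hab (h ▸ hb.symm), by rw [hS, ← h]⟩
    · exact ⟨a, fun ha => hab (ha ▸ h.symm ▸ rfl), by rw [hS, ← h, Set.pair_comm]⟩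
  obtain ⟨w1, hw1ne, hw1⟩ : ∃ w, w ≠ v1 ∧
      {x ∈ Q1.verts | subDeg Q1 x = 1} = {v1, w} := by
    obtain ⟨a, b, hab, hS⟩ := Set.ncard_eq_two.mp hS1
    have hv1S : v1 ∈ ({a, b} : Set V) := hS ▸ ⟨e1.1, e1.2⟩
    rcases hv1S with h | h
    · exact ⟨b, fun hb => hab (h ▸ hb.symm), by rw [hS, ← h]⟩
    · exact ⟨a, fun ha => hab (ha ▸ h.symm ▸ rfl), by rw [hS, ← h, Set.pair_comm]⟩
  have hw0m : w0 ∈ Q0.verts ∧ subDeg Q0 w0 = 1 := by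
    have : w0 ∈ ({v0, w0} : Set V) := Or.inr rfl
    rw [← hw0] at this
    exact this
  have hw1m : w1 ∈ Q1.verts ∧ subDeg Q1 w1 = 1 := by
    have : w1 ∈ ({v1, w1} : Set V) := Or.inr rfl
    rw [← hw1] at this
    exact this
  have hSR : {x ∈ R.verts | subDeg R x = 1} = {w0, w1} := by
    ext x
    simp only [Set.mem_setOf_eq, Set.mem_insert_iff, Set.mem_singleton_iff]
    constructor
    · rintro ⟨hxv, hxd⟩
      rw [hverts] at hxv
      rcases hxv with hx | hx
      · by_cases hxe : x = v0
        · rw [hxe, degv0] at hxd; omega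
        · left
          have : subDeg R x = subDeg Q0 x := by rw [subDeg, subDeg, deg0 x hx hxe]
          have hxS : x ∈ ({v0, w0} : Set V) := hw0 ▸ (⟨hx, this ▸ hxd⟩ :
            x ∈ {x ∈ Q0.verts | subDeg Q0 x = 1})
          rcases hxS with h | h
          · exact absurd h hxe
          · exact h
      · by_cases hxe : x = v1
        · rw [hxe, degv1] at hxd; omega
        · right
          have : subDeg R x = subDeg Q1 x := by rw [subDeg, subDeg, deg1 x hx hxe]
          have hxS : x ∈ ({v1, w1} : Set V) := hw1 ▸ (⟨hx, this ▸ hxd⟩ :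
            x ∈ {x ∈ Q1.verts | subDeg Q1 x = 1})
          rcases hxS with h | h
          · exact absurd h hxe
          · exact h
    · rintro (h | h)
      · subst h
        refine ⟨hverts ▸ Or.inl hw0m.1, ?_⟩
        rw [subDeg, deg0 x hw0m.1 hw0ne]
        exact hw0m.2
      · subst h
        refine ⟨hverts ▸ Or.inr hw1m.1, ?_⟩
        rw [subDeg, deg1 x hw1m.1 hw1ne]
        exact hw1m.2
  have hw01 : w0 ≠ w1 := fun h => (Set.disjoint_left.mp hdisj hw0m.1) (h ▸ hw1m.1)
  refine ⟨R, ⟨conn, Or.inr ⟨?_, ?_⟩⟩, hverts⟩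
  · rw [hSR, Set.ncard_pair hw01]
  · intro x hx
    rw [hverts] at hx
    rcases hx with hx | hx
    · by_cases hxe : x = v0
      · right; rw [hxe]; exact degv0
      · rw [subDeg, deg0 x hx hxe]; exact hd0 x hx
    · by_cases hxe : x = v1
      · right; rw [hxe]; exact degv1
      · rw [subDeg, deg1 x hx hxe]; exact hd1 x hx


lemma single_cover {V : Type*} (G : SimpleGraph V) {P : G.Subgraph} (hp : IsPathSubgraph P)
    {N : ℕ} (h4 : 4 ≤ P.verts.ncard) (hN : N ≤ P.verts.ncard) : HasDisjointPathCover G N := by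
  refine ⟨{P}, ?_, Set.pairwise_singleton _ _, ?_⟩
  · intro Q hQ
    rw [Set.mem_singleton_iff] at hQ
    subst hQ
    exact ⟨hp, h4⟩
  · have h : (⋃ Q ∈ ({P} : Set G.Subgraph), Q.verts) = P.verts := by simp
    rw [h]
    exact hN

/-- an edge-center configuration with `A2 = {1}` (index `0`) yields a path
of order at least 5, and moreover a path of order at least 6 when `A1 = {2}` (index `1`);
in particular vertex-disjoint `4⁺`-paths covering at least 5 (respectively 6) vertices. -/
theorem stmt13 {V : Type*} [Fintype V] [DecidableEq V] (G : SimpleGraph V)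
    (cfg : EdgeCenterConfig G) (h2 : cfg.A2 = ({0} : Finset (Fin 2))) :
    ((∃ P : G.Subgraph, IsPathSubgraph P ∧ 5 ≤ P.verts.ncard) ∧
      HasDisjointPathCover G 5) ∧
    (cfg.A1 = ({1} : Finset (Fin 2)) →
      (∃ P : G.Subgraph, IsPathSubgraph P ∧ 6 ≤ P.verts.ncard) ∧
      HasDisjointPathCover G 6) := by
  have h0m : (0 : Fin 2) ∈ cfg.A1 ∪ cfg.A2 := by rw [h2]; simp
  have hP := cfg.hPpath 0 (by rw [h2]; simp)
  have hPc := cfg.hPcard 0 (by rw [h2]; simp)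
  constructor
  · exact ⟨⟨cfg.P 0, hP, hPc⟩, single_cover G hP (by omega) hPc⟩
  · intro h1
    have h1m : (1 : Fin 2) ∈ cfg.A1 ∪ cfg.A2 := by rw [h1]; simp
    have hv01 : cfg.v 0 ≠ cfg.v 1 := cfg.inj.ne (by decide)
    have hdisj : Disjoint (cfg.Q 0).verts (cfg.Q 1).verts := by
      have hs0 := cfg.hQverts 0 h0m
      have hs1 := cfg.hQverts 1 h1m
      refine Set.disjoint_left.mpr fun x hx0 hx1 => ?_
      rcases Set.mem_insert_iff.mp (hs0 hx0) with rfl | hU0 <;>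
        rcases Set.mem_insert_iff.mp (hs1 hx1) with h | hU1
      · exact hv01 h
      · exact Set.disjoint_left.mp (cfg.hUv 1 h1m) hU1 ⟨0, rfl⟩
      · exact Set.disjoint_left.mp (cfg.hUv 0 h0m) hU0 ⟨1, h.symm⟩
      · exact Set.disjoint_left.mp (cfg.hUdisj 0 h0m 1 h1m (by decide)) hU0 hU1
    obtain ⟨R, hRpath, hRverts⟩ := concat_paths cfg.adj (cfg.hQpath 0 h0m) (cfg.hQpath 1 h1m)
      (cfg.hQend 0 h0m) (cfg.hQend 1 h1m) hdisj
    have hc : 6 ≤ R.verts.ncard := by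
      rw [hRverts, Set.ncard_union_eq hdisj (Set.toFinite _) (Set.toFinite _)]
      have h3 := cfg.hQcard 0 h0m
      have h4 := cfg.hQcard 1 h1m
      omega
    exact ⟨⟨R, hRpath, hc⟩, single_cover G hRpath (by omega) hc⟩
end

section
/- Consider a 5-path-center configuration in a finite simple graph G with |A2| = 1 and |A1| = 2. Then G contains a collection of vertex-disjoint paths, each of order at least 4, covering at least 10 vertices in total. -/
open SimpleGraph

section Glue

variable {V : Type*} [Fintype V] {G : SimpleGraph V}

/-- `x` is a "tip" of `P`: either `P` is the single vertex `x`, or `x` is an endpoint. -/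
def IsPathTip (P : G.Subgraph) (x : V) : Prop :=
  x ∈ P.verts ∧ (P.verts = {x} ∨ subDeg P x = 1)

lemma nbr_empty_of_not_mem {P : G.Subgraph} {w : V} (h : w ∉ P.verts) :
    P.neighborSet w = ∅ := by
  ext u
  simp only [Subgraph.mem_neighborSet, Set.mem_empty_iff_false, iff_false]
  exact fun h' => h h'.fst_mem

lemma subDeg_singleton {P : G.Subgraph} {x : V} (h : P.verts = {x}) : subDeg P x = 0 := by
  have : P.neighborSet x = ∅ := by
    ext u
    simp only [Subgraph.mem_neighborSet, Set.mem_empty_iff_false, iff_false]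
    intro hadj
    have hu : u ∈ P.verts := hadj.snd_mem
    rw [h, Set.mem_singleton_iff] at hu
    exact (P.adj_sub hadj).ne (hu.symm)
  simp [subDeg, this]

lemma tip_cases {P : G.Subgraph} {x : V} (hP : IsPathSubgraph P) (hx : IsPathTip P x) :
    (P.verts = {x} ∧ subDeg P x = 0) ∨
    (subDeg P x = 1 ∧ ∃ x', x' ≠ x ∧ x' ∈ P.verts ∧
      {w ∈ P.verts | subDeg P w = 1} = {x, x'} ∧
      (∀ w ∈ P.verts, subDeg P w = 1 ∨ subDeg P w = 2)) := by
  rcases hP.2 with ⟨v, hv⟩ | ⟨h2, hdeg⟩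
  · have hxv : x = v := by
      have := hx.1; rw [hv, Set.mem_singleton_iff] at this; exact this
    subst hxv
    exact Or.inl ⟨hv, subDeg_singleton hv⟩
  · have hdx : subDeg P x = 1 := by
      rcases hx.2 with h | h
      · have h0 := subDeg_singleton h
        rcases hdeg x hx.1 with h1 | h1 <;> omega
      · exact h
    obtain ⟨a, b, hab, hS⟩ := Set.ncard_eq_two.mp h2
    have hxS : x ∈ ({a, b} : Set V) := by
      rw [← hS]; exact ⟨hx.1, hdx⟩
    rcases hxS with rfl | rfl
    · refine Or.inr ⟨hdx, b, hab.symm, ?_, hS, hdeg⟩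
      have : b ∈ ({x, b} : Set V) := by simp
      rw [← hS] at this; exact this.1
    · refine Or.inr ⟨hdx, a, hab, ?_, by rw [hS, Set.pair_comm], hdeg⟩
      have : a ∈ ({a, x} : Set V) := by simp
      rw [← hS] at this; exact this.1

/-- Characterization of degree-1 vertices of the glued graph on one side. -/
lemma glue_side {R P : G.Subgraph} {x : V} (hP : IsPathSubgraph P) (hx : IsPathTip P x)
    (hkeep : ∀ w ∈ P.verts, w ≠ x → subDeg R w = subDeg P w)
    (hdegx : subDeg R x = subDeg P x + 1) :
    ∃ a ∈ P.verts, (∀ w ∈ P.verts, (subDeg R w = 1 ↔ w = a)) ∧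
      ∀ w ∈ P.verts, subDeg R w = 1 ∨ subDeg R w = 2 := by
  rcases tip_cases hP hx with ⟨hv, h0⟩ | ⟨h1, x', hx'x, hx'mem, hS, hdeg⟩
  · refine ⟨x, hx.1, ?_, ?_⟩
    · intro w hw
      rw [hv, Set.mem_singleton_iff] at hw
      subst hw
      rw [hdegx, h0]
      simp
    · intro w hw
      rw [hv, Set.mem_singleton_iff] at hw
      subst hw
      rw [hdegx, h0]
      exact Or.inl rfl
  · refine ⟨x', hx'mem, ?_, ?_⟩
    · intro w hw
      by_cases hwx : w = x
      · subst hwx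
        rw [hdegx, h1]
        constructor
        · omega
        · intro h; exact absurd h.symm hx'x
      · rw [hkeep w hw hwx]
        constructor
        · intro hd
          have hmem : w ∈ ({x, x'} : Set V) := by rw [← hS]; exact ⟨hw, hd⟩
          simp only [Set.mem_insert_iff, Set.mem_singleton_iff] at hmem
          rcases hmem with h | h
          · exact absurd h hwx
          · exact h
        · intro h
          have hmem : x' ∈ {w ∈ P.verts | subDeg P w = 1} := by
            rw [hS]; simp
          rw [h]; exact hmem.2
    · intro w hw
      by_cases hwx : w = x
      · subst hwx; rw [hdegx, h1]; exact Or.inr rfl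
      · rw [hkeep w hw hwx]; exact hdeg w hw

lemma glue_s14 {P Q : G.Subgraph} {x y : V}
    (hP : IsPathSubgraph P) (hQ : IsPathSubgraph Q) (hdisj : Disjoint P.verts Q.verts)
    (hx : IsPathTip P x) (hy : IsPathTip Q y) (hxy : G.Adj x y) :
    ∃ R : G.Subgraph, IsPathSubgraph R ∧ R.verts = P.verts ∪ Q.verts ∧
      (Q.verts = {y} → IsPathTip R y) := by
  classical
  set E : G.Subgraph := G.subgraphOfAdj hxy with hE
  have hyP : y ∉ P.verts := fun h => (Set.disjoint_left.mp hdisj h) hy.1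
  have hxQ : x ∉ Q.verts := fun h => (Set.disjoint_left.mp hdisj hx.1) h
  have hxyne : x ≠ y := hxy.ne
  refine ⟨P ⊔ E ⊔ Q, ?_⟩
  have hverts : (P ⊔ E ⊔ Q).verts = P.verts ∪ Q.verts := by
    simp only [Subgraph.verts_sup, hE, subgraphOfAdj_verts]
    ext w
    simp only [Set.mem_union, Set.mem_insert_iff, Set.mem_singleton_iff]
    constructor
    · rintro ((h | rfl | rfl) | h)
      exacts [Or.inl h, Or.inl hx.1, Or.inr hy.1, Or.inr h]
    · rintro (h | h)
      exacts [Or.inl (Or.inl h), Or.inr h]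
  have hns : ∀ w, (P ⊔ E ⊔ Q).neighborSet w
      = P.neighborSet w ∪ E.neighborSet w ∪ Q.neighborSet w := fun w => by
    rw [Subgraph.neighborSet_sup, Subgraph.neighborSet_sup]
  have hkeepP : ∀ w ∈ P.verts, w ≠ x → subDeg (P ⊔ E ⊔ Q) w = subDeg P w := by
    intro w hw hwx
    have hwy : w ≠ y := fun h => hyP (h ▸ hw)
    unfold subDeg
    rw [hns, hE, neighborSet_subgraphOfAdj_of_ne_of_ne hxy hwx hwy,
      nbr_empty_of_not_mem (fun h => (Set.disjoint_left.mp hdisj hw) h)]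
    simp
  have hkeepQ : ∀ w ∈ Q.verts, w ≠ y → subDeg (P ⊔ E ⊔ Q) w = subDeg Q w := by
    intro w hw hwy
    have hwx : w ≠ x := fun h => hxQ (h ▸ hw)
    unfold subDeg
    rw [hns, hE, neighborSet_subgraphOfAdj_of_ne_of_ne hxy hwx hwy,
      nbr_empty_of_not_mem (fun h => (Set.disjoint_right.mp hdisj hw) h)]
    simp
  have hdegx : subDeg (P ⊔ E ⊔ Q) x = subDeg P x + 1 := by
    unfold subDeg
    rw [hns, hE, neighborSet_fst_subgraphOfAdj, nbr_empty_of_not_mem hxQ, Set.union_empty]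
    rw [Set.ncard_union_eq (by
      simp only [Set.disjoint_singleton_right]
      exact fun h => hyP (Subgraph.Adj.snd_mem h))]
    simp
  have hdegy : subDeg (P ⊔ E ⊔ Q) y = subDeg Q y + 1 := by
    unfold subDeg
    rw [hns, hE, neighborSet_snd_subgraphOfAdj, nbr_empty_of_not_mem hyP, Set.empty_union]
    rw [Set.union_comm, Set.ncard_union_eq (by
      simp only [Set.disjoint_singleton_right]
      exact fun h => hxQ (Subgraph.Adj.snd_mem h))]
    simp
  obtain ⟨a, haP, haiff, hadeg⟩ := glue_side hP hx hkeepP hdegx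
  obtain ⟨b, hbQ, hbiff, hbdeg⟩ := glue_side hQ hy hkeepQ hdegy
  have hab : a ≠ b := fun h => (Set.disjoint_left.mp hdisj haP) (h ▸ hbQ)
  have hconn : (P ⊔ E ⊔ Q).Connected := by
    have h1 : (P ⊔ E).Connected := by
      refine Subgraph.connected_sup hP.1.preconnected (Subgraph.subgraphOfAdj_connected hxy).preconnected ⟨x, hx.1, ?_⟩
      simp [hE]
    refine Subgraph.connected_sup h1.preconnected hQ.1.preconnected ⟨y, Or.inr ?_, hy.1⟩
    simp [hE]
  have hSset : {w ∈ (P ⊔ E ⊔ Q).verts | subDeg (P ⊔ E ⊔ Q) w = 1} = {a, b} := by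
    ext w
    simp only [Set.mem_setOf_eq, hverts, Set.mem_union, Set.mem_insert_iff,
      Set.mem_singleton_iff]
    constructor
    · rintro ⟨h | h, hd⟩
      · exact Or.inl ((haiff w h).mp hd)
      · exact Or.inr ((hbiff w h).mp hd)
    · rintro (h | h)
      · rw [h]; exact ⟨Or.inl haP, (haiff a haP).mpr rfl⟩
      · rw [h]; exact ⟨Or.inr hbQ, (hbiff b hbQ).mpr rfl⟩
  refine ⟨⟨hconn, Or.inr ⟨by rw [hSset]; exact Set.ncard_pair hab, ?_⟩⟩, hverts, ?_⟩
  · intro w hw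
    rw [hverts] at hw
    rcases hw with h | h
    · exact hadeg w h
    · exact hbdeg w h
  · intro hQy
    refine ⟨by rw [hverts]; exact Or.inr hy.1, Or.inr ?_⟩
    rw [hdegy, subDeg_singleton hQy]

lemma single_path (v : V) : IsPathSubgraph (G.singletonSubgraph v) :=
  ⟨Subgraph.singletonSubgraph_connected, Or.inl ⟨v, rfl⟩⟩

lemma single_tip (v : V) : IsPathTip (G.singletonSubgraph v) v :=
  ⟨rfl, Or.inl rfl⟩

end Glue

section Config

variable {V : Type*} [Fintype V] [DecidableEq V] {G : SimpleGraph V} (cfg : FivePathConfig G)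

lemma vset_disj {i j : Fin 5} (hi : i ∈ cfg.A1 ∪ cfg.A2) (hj : j ∈ cfg.A1 ∪ cfg.A2)
    (hij : i ≠ j) :
    Disjoint (insert (cfg.v i) (cfg.U i)) (insert (cfg.v j) (cfg.U j)) := by
  rw [Set.disjoint_left]
  intro a ha hb
  simp only [Set.mem_insert_iff] at ha hb
  rcases ha with rfl | ha
  · rcases hb with h | hb
    · exact hij (cfg.inj h)
    · exact Set.disjoint_right.mp (cfg.hUv j hj) (Set.mem_range_self i) hb
  · rcases hb with h | hb
    · exact Set.disjoint_right.mp (cfg.hUv i hi) ⟨j, h.symm⟩ ha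
    · exact Set.disjoint_left.mp (cfg.hUdisj i hi j hj hij) ha hb

lemma vm_not_mem {i m : Fin 5} (hi : i ∈ cfg.A1 ∪ cfg.A2) (hmi : m ≠ i) :
    cfg.v m ∉ insert (cfg.v i) (cfg.U i) := by
  simp only [Set.mem_insert_iff]
  rintro (h | h)
  · exact hmi (cfg.inj h)
  · exact Set.disjoint_right.mp (cfg.hUv i hi) (Set.mem_range_self m) h

lemma endpoint_tip {P : G.Subgraph} {x : V} (h : IsPathEndpoint P x) : IsPathTip P x :=
  ⟨h.1, Or.inr h.2⟩

/-- glue `Q z` with the single vertex `v m`: a path on `Q z ∪ {v m}` of order ≥ 4. -/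
lemma extendQ {z m : Fin 5} (hz : z ∈ cfg.A1 ∪ cfg.A2) (hmz : m ≠ z)
    (hadj : G.Adj (cfg.v z) (cfg.v m)) :
    ∃ R : G.Subgraph, IsPathSubgraph R ∧ R.verts = (cfg.Q z).verts ∪ {cfg.v m} ∧
      4 ≤ R.verts.ncard := by
  have hdisj : Disjoint (cfg.Q z).verts {cfg.v m} := by
    rw [Set.disjoint_singleton_right]
    exact fun h => vm_not_mem cfg hz hmz (cfg.hQverts z hz h)
  obtain ⟨R, hRpath, hRverts, -⟩ := glue_s14 (cfg.hQpath z hz) (single_path (cfg.v m)) hdisj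
    (endpoint_tip (cfg.hQend z hz)) (single_tip (cfg.v m)) hadj
  rw [singletonSubgraph_verts] at hRverts
  refine ⟨R, hRpath, hRverts, ?_⟩
  rw [hRverts, Set.ncard_union_eq hdisj, Set.ncard_singleton]
  have := cfg.hQcard z hz
  omega

lemma buildCover {x y z m : Fin 5}
    (hx : x ∈ cfg.A1 ∪ cfg.A2) (hy : y ∈ cfg.A1 ∪ cfg.A2) (hz : z ∈ cfg.A1 ∪ cfg.A2)
    (hxy : x ≠ y) (hxz : x ≠ z) (hyz : y ≠ z) (hmx : m ≠ x) (hmy : m ≠ y) (hmz : m ≠ z)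
    (haxy : G.Adj (cfg.v x) (cfg.v y)) (hazm : G.Adj (cfg.v z) (cfg.v m)) :
    HasDisjointPathCover G 10 := by
  have hdisjxy : Disjoint (cfg.Q x).verts (cfg.Q y).verts :=
    (vset_disj cfg hx hy hxy).mono (cfg.hQverts x hx) (cfg.hQverts y hy)
  obtain ⟨R1, hR1path, hR1verts, -⟩ := glue_s14 (cfg.hQpath x hx) (cfg.hQpath y hy) hdisjxy
    (endpoint_tip (cfg.hQend x hx)) (endpoint_tip (cfg.hQend y hy)) haxy
  obtain ⟨R2, hR2path, hR2verts, hR2card⟩ := extendQ cfg hz hmz hazm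
  have hcard1 : 6 ≤ R1.verts.ncard := by
    rw [hR1verts, Set.ncard_union_eq hdisjxy]
    have h1 := cfg.hQcard x hx
    have h2 := cfg.hQcard y hy
    omega
  have hdisj12 : Disjoint R1.verts R2.verts := by
    rw [hR1verts, hR2verts]
    apply Set.disjoint_union_left.mpr
    constructor <;> apply Set.disjoint_union_right.mpr
    · exact ⟨(vset_disj cfg hx hz hxz).mono (cfg.hQverts x hx) (cfg.hQverts z hz),
        Set.disjoint_singleton_right.mpr (fun h => vm_not_mem cfg hx hmx (cfg.hQverts x hx h))⟩
    · exact ⟨(vset_disj cfg hy hz hyz).mono (cfg.hQverts y hy) (cfg.hQverts z hz),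
        Set.disjoint_singleton_right.mpr (fun h => vm_not_mem cfg hy hmy (cfg.hQverts y hy h))⟩
  refine ⟨{R1, R2}, ?_, ?_, ?_⟩
  · intro P hP
    simp only [Set.mem_insert_iff, Set.mem_singleton_iff] at hP
    rcases hP with rfl | rfl
    · exact ⟨hR1path, by omega⟩
    · exact ⟨hR2path, hR2card⟩
  · intro P hP P' hP' hne
    simp only [Set.mem_insert_iff, Set.mem_singleton_iff] at hP hP'
    rcases hP with rfl | rfl <;> rcases hP' with rfl | rfl
    · exact absurd rfl hne
    · exact hdisj12
    · exact hdisj12.symm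
    · exact absurd rfl hne
  · show 10 ≤ _
    rw [Set.biUnion_pair, Set.ncard_union_eq hdisj12]
    omega

lemma buildCover024 (h0 : (0 : Fin 5) ∈ cfg.A1 ∪ cfg.A2)
    (h2 : (2 : Fin 5) ∈ cfg.A1 ∪ cfg.A2) (h4 : (4 : Fin 5) ∈ cfg.A1 ∪ cfg.A2) :
    HasDisjointPathCover G 10 := by
  have a01 : G.Adj (cfg.v 0) (cfg.v 1) := by simpa using cfg.adj 0
  have a12 : G.Adj (cfg.v 1) (cfg.v 2) := by simpa using cfg.adj 1
  have a43 : G.Adj (cfg.v 4) (cfg.v 3) := by simpa using (cfg.adj 3).symm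
  -- R1a = Q0 + v1
  have hd01 : Disjoint (cfg.Q 0).verts {cfg.v 1} := by
    rw [Set.disjoint_singleton_right]
    exact fun h => vm_not_mem cfg h0 (by decide) (cfg.hQverts 0 h0 h)
  obtain ⟨R1a, hR1apath, hR1averts, hR1atip⟩ := glue_s14 (cfg.hQpath 0 h0)
    (single_path (cfg.v 1)) hd01 (endpoint_tip (cfg.hQend 0 h0)) (single_tip (cfg.v 1)) a01
  rw [singletonSubgraph_verts] at hR1averts
  have htip1 : IsPathTip R1a (cfg.v 1) := hR1atip rfl
  -- R1 = R1a + Q2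
  have hd2 : Disjoint R1a.verts (cfg.Q 2).verts := by
    rw [hR1averts]
    apply Set.disjoint_union_left.mpr
    refine ⟨(vset_disj cfg h0 h2 (by decide)).mono (cfg.hQverts 0 h0) (cfg.hQverts 2 h2), ?_⟩
    rw [Set.disjoint_singleton_left]
    exact fun h => vm_not_mem cfg h2 (by decide) (cfg.hQverts 2 h2 h)
  obtain ⟨R1, hR1path, hR1verts, -⟩ := glue_s14 hR1apath (cfg.hQpath 2 h2) hd2
    htip1 (endpoint_tip (cfg.hQend 2 h2)) a12
  obtain ⟨R2, hR2path, hR2verts, hR2card⟩ := extendQ cfg h4 (by decide) a43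
  have hcard1 : 7 ≤ R1.verts.ncard := by
    rw [hR1verts, Set.ncard_union_eq hd2, hR1averts, Set.ncard_union_eq hd01,
      Set.ncard_singleton]
    have hq0 := cfg.hQcard 0 h0
    have hq2 := cfg.hQcard 2 h2
    omega
  have hdisj12 : Disjoint R1.verts R2.verts := by
    rw [hR1verts, hR1averts, hR2verts]
    apply Set.disjoint_union_left.mpr
    refine ⟨Set.disjoint_union_left.mpr ⟨?_, ?_⟩, ?_⟩ <;> apply Set.disjoint_union_right.mpr
    · exact ⟨(vset_disj cfg h0 h4 (by decide)).mono (cfg.hQverts 0 h0) (cfg.hQverts 4 h4),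
        Set.disjoint_singleton_right.mpr
          (fun h => vm_not_mem cfg h0 (by decide) (cfg.hQverts 0 h0 h))⟩
    · refine ⟨?_, ?_⟩
      · rw [Set.disjoint_singleton_left]
        exact fun h => vm_not_mem cfg h4 (by decide) (cfg.hQverts 4 h4 h)
      · rw [Set.disjoint_singleton_left, Set.mem_singleton_iff]
        exact fun h => (by decide : (1 : Fin 5) ≠ 3) (cfg.inj h)
    · exact ⟨(vset_disj cfg h2 h4 (by decide)).mono (cfg.hQverts 2 h2) (cfg.hQverts 4 h4),
        Set.disjoint_singleton_right.mpr
          (fun h => vm_not_mem cfg h2 (by decide) (cfg.hQverts 2 h2 h))⟩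
  refine ⟨{R1, R2}, ?_, ?_, ?_⟩
  · intro P hP
    simp only [Set.mem_insert_iff, Set.mem_singleton_iff] at hP
    rcases hP with rfl | rfl
    · exact ⟨hR1path, by omega⟩
    · exact ⟨hR2path, hR2card⟩
  · intro P hP P' hP' hne
    simp only [Set.mem_insert_iff, Set.mem_singleton_iff] at hP hP'
    rcases hP with rfl | rfl <;> rcases hP' with rfl | rfl
    · exact absurd rfl hne
    · exact hdisj12
    · exact hdisj12.symm
    · exact absurd rfl hne
  · show 10 ≤ _
    rw [Set.biUnion_pair, Set.ncard_union_eq hdisj12]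
    omega

end Config

set_option synthInstance.maxSize 400 in
lemma pick : ∀ a b c : Fin 5, a ≠ b → a ≠ c → b ≠ c →
    ({a, b, c} : Finset (Fin 5)) = {0, 2, 4} ∨
    ∃ x y z m : Fin 5,
      x ∈ ({a, b, c} : Finset (Fin 5)) ∧ y ∈ ({a, b, c} : Finset (Fin 5)) ∧
      z ∈ ({a, b, c} : Finset (Fin 5)) ∧ m ∉ ({a, b, c} : Finset (Fin 5)) ∧
      x ≠ y ∧ x ≠ z ∧ y ≠ z ∧
      (∃ t : Fin 4, (t.castSucc = x ∧ t.succ = y) ∨ (t.castSucc = y ∧ t.succ = x)) ∧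
      (∃ t : Fin 4, (t.castSucc = z ∧ t.succ = m) ∨ (t.castSucc = m ∧ t.succ = z)) := by
  decide

/-- a 5-path-center configuration with `|A2| = 1` and `|A1| = 2` yields
vertex-disjoint `4⁺`-paths covering at least 10 vertices. -/
theorem stmt14 {V : Type*} [Fintype V] [DecidableEq V] (G : SimpleGraph V)
    (cfg : FivePathConfig G) (h2 : cfg.A2.card = 1) (h1 : cfg.A1.card = 2) :
    HasDisjointPathCover G 10 := by
  classical
  obtain ⟨i, hA2⟩ := Finset.card_eq_one.mp h2
  obtain ⟨j, k, hjk, hA1⟩ := Finset.card_eq_two.mp h1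
  have hiA2 : i ∈ cfg.A2 := by rw [hA2]; exact Finset.mem_singleton_self i
  have hjA1 : j ∈ cfg.A1 := by rw [hA1]; simp
  have hkA1 : k ∈ cfg.A1 := by rw [hA1]; simp
  have hij : i ≠ j := fun h => Finset.disjoint_left.mp cfg.hA hjA1 (h ▸ hiA2)
  have hik : i ≠ k := fun h => Finset.disjoint_left.mp cfg.hA hkA1 (h ▸ hiA2)
  have hanch : cfg.A1 ∪ cfg.A2 = {i, j, k} := by
    rw [hA1, hA2]
    ext t
    simp only [Finset.mem_union, Finset.mem_insert, Finset.mem_singleton]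
    tauto
  rcases pick i j k hij hik hjk with h024 |
    ⟨x, y, z, m, hxm, hym, hzm, hmm, hxy, hxz, hyz, ⟨t1, ht1⟩, ⟨t2, ht2⟩⟩
  · apply buildCover024 cfg <;> [skip; skip; skip] <;> rw [hanch, h024] <;> decide
  · have hxA : x ∈ cfg.A1 ∪ cfg.A2 := by rw [hanch]; exact hxm
    have hyA : y ∈ cfg.A1 ∪ cfg.A2 := by rw [hanch]; exact hym
    have hzA : z ∈ cfg.A1 ∪ cfg.A2 := by rw [hanch]; exact hzm
    have haxy : G.Adj (cfg.v x) (cfg.v y) := by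
      rcases ht1 with ⟨ha, hb⟩ | ⟨ha, hb⟩
      · rw [← ha, ← hb]; exact cfg.adj t1
      · rw [← ha, ← hb]; exact (cfg.adj t1).symm
    have hazm : G.Adj (cfg.v z) (cfg.v m) := by
      rcases ht2 with ⟨ha, hb⟩ | ⟨ha, hb⟩
      · rw [← ha, ← hb]; exact cfg.adj t2
      · rw [← ha, ← hb]; exact (cfg.adj t2).symm
    have hmx : m ≠ x := fun h => hmm (h ▸ hxm)
    have hmy : m ≠ y := fun h => hmm (h ▸ hym)
    have hmz : m ≠ z := fun h => hmm (h ▸ hzm)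
    exact buildCover cfg hxA hyA hzA hxy hxz hyz hmx hmy hmz haxy hazm
end

section
/- Consider a 5-path-center configuration in a finite simple graph G with A2 = {i} and A1 = {j}, where i ≠ j. Then G contains a collection of vertex-disjoint paths, each of order at least 4, covering at least 7 vertices in total; and if moreover (i,j) ∉ {(2,1), (4,5)}, then G contains such a collection covering at least 9 vertices in total. -/
open SimpleGraph

lemma extend_path_s15 {V : Type*} [Fintype V] [DecidableEq V] {G : SimpleGraph V}
    {Q : G.Subgraph} {x w : V} (hQ : IsPathSubgraph Q) (hx : IsPathEndpoint Q x)
    (hw : w ∉ Q.verts) (hadj : G.Adj x w) :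
    IsPathSubgraph (Q ⊔ G.subgraphOfAdj hadj) ∧
    IsPathEndpoint (Q ⊔ G.subgraphOfAdj hadj) w ∧
    (Q ⊔ G.subgraphOfAdj hadj).verts = insert w Q.verts := by
  obtain ⟨hxQ, hdx⟩ := hx
  have hwx : w ≠ x := hadj.ne.symm
  -- verts
  have hverts : (Q ⊔ G.subgraphOfAdj hadj).verts = insert w Q.verts := by
    simp only [Subgraph.verts_sup, subgraphOfAdj_verts]
    ext u
    simp only [Set.mem_union, Set.mem_insert_iff, Set.mem_singleton_iff]
    constructor
    · rintro (h | h | h)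
      · exact Or.inr h
      · exact Or.inr (h ▸ hxQ)
      · exact Or.inl h
    · rintro (h | h)
      · exact Or.inr (Or.inr h)
      · exact Or.inl h
  -- neighbor sets
  have hnbr : ∀ u, (Q ⊔ G.subgraphOfAdj hadj).neighborSet u
      = Q.neighborSet u ∪ (G.subgraphOfAdj hadj).neighborSet u :=
    fun u => Subgraph.neighborSet_sup u
  have hQw : Q.neighborSet w = ∅ := by
    ext u; simp only [Subgraph.mem_neighborSet, Set.mem_empty_iff_false, iff_false]
    intro h; exact hw (Q.edge_vert h)
  have hdegw : subDeg (Q ⊔ G.subgraphOfAdj hadj) w = 1 := by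
    unfold subDeg
    rw [hnbr, hQw, neighborSet_snd_subgraphOfAdj, Set.empty_union, Set.ncard_singleton]
  have hdegx : subDeg (Q ⊔ G.subgraphOfAdj hadj) x = 2 := by
    unfold subDeg
    rw [hnbr, neighborSet_fst_subgraphOfAdj]
    obtain ⟨y, hy⟩ := Set.ncard_eq_one.mp hdx
    have hyw : y ≠ w := by
      rintro rfl
      have : y ∈ Q.neighborSet x := hy ▸ rfl
      exact hw (Q.edge_vert (Q.adj_symm this))
    rw [hy, show ({y} ∪ {w} : Set V) = {y, w} by ext u; simp; tauto]
    exact Set.ncard_pair hyw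
  have hdego : ∀ u, u ≠ x → u ≠ w → subDeg (Q ⊔ G.subgraphOfAdj hadj) u = subDeg Q u := by
    intro u hux huw
    unfold subDeg
    rw [hnbr, neighborSet_subgraphOfAdj_of_ne_of_ne hadj hux huw, Set.union_empty]
  -- Q is in the two-degree-one branch
  have hQ2 : ({v ∈ Q.verts | subDeg Q v = 1}).ncard = 2 ∧
      ∀ v ∈ Q.verts, subDeg Q v = 1 ∨ subDeg Q v = 2 := by
    rcases hQ.2 with ⟨z, hz⟩ | h
    · exfalso
      have hxz : x = z := by rw [← Set.mem_singleton_iff, ← hz]; exact hxQ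
      obtain ⟨y, hy⟩ := Set.ncard_eq_one.mp hdx
      have hyv : y ∈ Q.verts := Q.edge_vert (Q.adj_symm (hy ▸ rfl : y ∈ Q.neighborSet x))
      have hyz : y = z := by rw [← Set.mem_singleton_iff, ← hz]; exact hyv
      exact G.ne_of_adj (Q.adj_sub (hy ▸ rfl : y ∈ Q.neighborSet x)) (hxz.trans hyz.symm)
    · exact h
  -- the new degree-one set
  have hS : {u ∈ (Q ⊔ G.subgraphOfAdj hadj).verts | subDeg (Q ⊔ G.subgraphOfAdj hadj) u = 1}
      = insert w ({u ∈ Q.verts | subDeg Q u = 1} \ {x}) := by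
    ext u
    simp only [Set.mem_setOf_eq, Set.mem_insert_iff, Set.mem_diff, Set.mem_singleton_iff,
      Set.sep_setOf, hverts]
    by_cases huw : u = w
    · subst huw
      simp [hdegw]
    · by_cases hux : u = x
      · subst hux
        simp [hdegx, huw, Ne.symm huw]
      · rw [hdego u hux huw]
        simp [huw, hux]
  have hfin : ∀ s : Set V, s.Finite := fun s => s.toFinite
  have hScard : ({u ∈ (Q ⊔ G.subgraphOfAdj hadj).verts |
      subDeg (Q ⊔ G.subgraphOfAdj hadj) u = 1}).ncard = 2 := by
    rw [hS, Set.ncard_insert_of_notMem (by simp; intro h _; exact (hw h).elim)]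
    have hxS : x ∈ {u ∈ Q.verts | subDeg Q u = 1} := ⟨hxQ, hdx⟩
    rw [Set.ncard_diff_singleton_of_mem hxS, hQ2.1]
  refine ⟨⟨?_, Or.inr ⟨hScard, ?_⟩⟩, ⟨by rw [hverts]; exact Set.mem_insert w _, hdegw⟩, hverts⟩
  · refine Subgraph.connected_sup hQ.1.preconnected (Subgraph.subgraphOfAdj_connected hadj).preconnected ⟨x, ?_⟩
    simp only [Subgraph.verts_inf, subgraphOfAdj_verts, Set.mem_inter_iff]
    exact ⟨hxQ, Or.inl rfl⟩
  · intro u hu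
    rw [hverts] at hu
    by_cases huw : u = w
    · subst huw; exact Or.inl hdegw
    · by_cases hux : u = x
      · subst hux; exact Or.inr hdegx
      · rw [hdego u hux huw]
        exact hQ2.2 u (hu.resolve_left huw)


lemma of9 {V : Type*} {G : SimpleGraph V} (h : HasDisjointPathCover G 9) :
    HasDisjointPathCover G 7 := by
  obtain ⟨Ps, ha, hb, hc⟩ := h
  exact ⟨Ps, ha, hb, by omega⟩

lemma good_cover {V : Type*} [Fintype V] [DecidableEq V] {G : SimpleGraph V}
    (cfg : FivePathConfig G) (i j k : Fin 5) (hij : i ≠ j) (hki : k ≠ i) (hkj : k ≠ j)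
    (hadj : G.Adj (cfg.v j) (cfg.v k)) (h2 : cfg.A2 = {i}) (h1 : cfg.A1 = {j}) :
    HasDisjointPathCover G 9 := by
  have hi2 : i ∈ cfg.A2 := by rw [h2]; exact Finset.mem_singleton_self i
  have hiU : i ∈ cfg.A1 ∪ cfg.A2 := Finset.mem_union_right _ hi2
  have hjU : j ∈ cfg.A1 ∪ cfg.A2 := Finset.mem_union_left _ (by rw [h1]; exact Finset.mem_singleton_self j)
  have hQsub := cfg.hQverts j hjU
  have hUvj := cfg.hUv j hjU
  have hUvi := cfg.hUv i hiU
  have hknotin : cfg.v k ∉ (cfg.Q j).verts := by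
    intro h
    rcases hQsub h with h | h
    · exact hkj (cfg.inj h)
    · exact Set.disjoint_left.mp hUvj h ⟨k, rfl⟩
  obtain ⟨hpath, hend, hverts⟩ :=
    extend_path_s15 (cfg.hQpath j hjU) (cfg.hQend j hjU) hknotin hadj
  set Q' := cfg.Q j ⊔ G.subgraphOfAdj hadj with hQ'
  have hQ'card : 4 ≤ Q'.verts.ncard := by
    rw [hverts, Set.ncard_insert_of_notMem hknotin]
    have := cfg.hQcard j hjU
    omega
  have hdisj : Disjoint Q'.verts (cfg.P i).verts := by
    rw [Set.disjoint_left]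
    intro u hu hu'
    have hu'' : u = cfg.v i ∨ u ∈ cfg.U i := cfg.hPverts i hi2 hu'
    rw [hverts] at hu
    rcases hu with rfl | hu
    · rcases hu'' with h | h
      · exact hki (cfg.inj h)
      · exact Set.disjoint_left.mp hUvi h ⟨k, rfl⟩
    · rcases hQsub hu with rfl | hu
      · rcases hu'' with h | h
        · exact hij (cfg.inj h).symm
        · exact Set.disjoint_left.mp hUvi h ⟨j, rfl⟩
      · rcases hu'' with rfl | h
        · exact Set.disjoint_left.mp hUvj hu ⟨i, rfl⟩
        · exact Set.disjoint_left.mp (cfg.hUdisj j hjU i hiU (Ne.symm hij)) hu h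
  refine ⟨{Q', cfg.P i}, ?_, ?_, ?_⟩
  · rintro P (rfl | rfl)
    · exact ⟨hpath, hQ'card⟩
    · exact ⟨cfg.hPpath i hi2, le_trans (by norm_num) (cfg.hPcard i hi2)⟩
  · rintro P (rfl | rfl) R (rfl | rfl) hne
    · exact absurd rfl hne
    · exact hdisj
    · exact hdisj.symm
    · exact absurd rfl hne
  · have hU : (⋃ P ∈ ({Q', cfg.P i} : Set G.Subgraph), P.verts)
        = Q'.verts ∪ (cfg.P i).verts := by
      simp [Set.biUnion_insert]
    rw [hU, Set.ncard_union_eq hdisj]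
    have := cfg.hPcard i hi2
    omega

lemma bad_cover {V : Type*} [Fintype V] [DecidableEq V] {G : SimpleGraph V}
    (cfg : FivePathConfig G) (j k1 k2 k3 k4 : Fin 5)
    (hnodup : (j ≠ k1 ∧ j ≠ k2 ∧ j ≠ k3 ∧ j ≠ k4) ∧ (k1 ≠ k2 ∧ k1 ≠ k3 ∧ k1 ≠ k4)
      ∧ (k2 ≠ k3 ∧ k2 ≠ k4) ∧ k3 ≠ k4)
    (hjU : j ∈ cfg.A1 ∪ cfg.A2)
    (a1 : G.Adj (cfg.v j) (cfg.v k1)) (a2 : G.Adj (cfg.v k1) (cfg.v k2))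
    (a3 : G.Adj (cfg.v k2) (cfg.v k3)) (a4 : G.Adj (cfg.v k3) (cfg.v k4)) :
    HasDisjointPathCover G 7 := by
  obtain ⟨⟨n01, n02, n03, n04⟩, ⟨n12, n13, n14⟩, ⟨n23, n24⟩, n34⟩ := hnodup
  have hQsub := cfg.hQverts j hjU
  have hUvj := cfg.hUv j hjU
  have vnotin : ∀ k : Fin 5, k ≠ j → cfg.v k ∉ (cfg.Q j).verts := by
    intro k hk h
    rcases hQsub h with h | h
    · exact hk (cfg.inj h)
    · exact Set.disjoint_left.mp hUvj h ⟨k, rfl⟩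
  have vne : ∀ a b : Fin 5, a ≠ b → cfg.v a ≠ cfg.v b := fun a b h hh => h (cfg.inj hh)
  obtain ⟨p1, e1, hv1⟩ :=
    extend_path_s15 (cfg.hQpath j hjU) (cfg.hQend j hjU) (vnotin k1 (Ne.symm n01)) a1
  set Q1 := cfg.Q j ⊔ G.subgraphOfAdj a1 with hQ1
  have m2 : cfg.v k2 ∉ Q1.verts := by
    rw [hv1]
    simp only [Set.mem_insert_iff, not_or]
    exact ⟨vne k2 k1 (Ne.symm n12), vnotin k2 (Ne.symm n02)⟩
  obtain ⟨p2, e2, hv2⟩ := extend_path_s15 p1 e1 m2 a2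
  set Q2 := Q1 ⊔ G.subgraphOfAdj a2 with hQ2
  have m3 : cfg.v k3 ∉ Q2.verts := by
    rw [hv2, hv1]
    simp only [Set.mem_insert_iff, not_or]
    exact ⟨vne k3 k2 (Ne.symm n23), vne k3 k1 (Ne.symm n13), vnotin k3 (Ne.symm n03)⟩
  obtain ⟨p3, e3, hv3⟩ := extend_path_s15 p2 e2 m3 a3
  set Q3 := Q2 ⊔ G.subgraphOfAdj a3 with hQ3
  have m4 : cfg.v k4 ∉ Q3.verts := by
    rw [hv3, hv2, hv1]
    simp only [Set.mem_insert_iff, not_or]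
    exact ⟨vne k4 k3 (Ne.symm n34), vne k4 k2 (Ne.symm n24), vne k4 k1 (Ne.symm n14),
      vnotin k4 (Ne.symm n04)⟩
  obtain ⟨p4, e4, hv4⟩ := extend_path_s15 p3 e3 m4 a4
  set Q4 := Q3 ⊔ G.subgraphOfAdj a4 with hQ4
  have hcard : 7 ≤ Q4.verts.ncard := by
    rw [hv4, Set.ncard_insert_of_notMem m4, hv3, Set.ncard_insert_of_notMem m3,
      hv2, Set.ncard_insert_of_notMem m2, hv1,
      Set.ncard_insert_of_notMem (vnotin k1 (Ne.symm n01))]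
    have := cfg.hQcard j hjU
    omega
  refine ⟨{Q4}, ?_, Set.pairwise_singleton _ _, ?_⟩
  · rintro P rfl
    exact ⟨p4, by omega⟩
  · simpa using hcard


/-- a 5-path-center configuration with `A2 = {i}` and `A1 = {j}`, `i ≠ j`,
yields vertex-disjoint `4⁺`-paths covering at least 7 vertices, and at least 9 whenever
`(i, j) ∉ {(2,1), (4,5)}` (with indices, `(i, j) ∉ {(1,0), (3,4)}`). -/
theorem stmt15 {V : Type*} [Fintype V] [DecidableEq V] (G : SimpleGraph V)
    (cfg : FivePathConfig G) (i j : Fin 5) (hij : i ≠ j)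
    (h2 : cfg.A2 = {i}) (h1 : cfg.A1 = {j}) :
    HasDisjointPathCover G 7 ∧
    (¬ ((i = 1 ∧ j = 0) ∨ (i = 3 ∧ j = 4)) → HasDisjointPathCover G 9) := by
  have a01 : G.Adj (cfg.v 0) (cfg.v 1) := cfg.adj 0
  have a12 : G.Adj (cfg.v 1) (cfg.v 2) := cfg.adj 1
  have a23 : G.Adj (cfg.v 2) (cfg.v 3) := cfg.adj 2
  have a34 : G.Adj (cfg.v 3) (cfg.v 4) := cfg.adj 3
  have hjU : j ∈ cfg.A1 ∪ cfg.A2 :=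
    Finset.mem_union_left _ (by rw [h1]; exact Finset.mem_singleton_self j)
  by_cases hbad : (i = 1 ∧ j = 0) ∨ (i = 3 ∧ j = 4)
  · refine ⟨?_, fun h => absurd hbad h⟩
    rcases hbad with ⟨hi, hj⟩ | ⟨hi, hj⟩ <;> subst hj
    · exact bad_cover cfg 0 1 2 3 4 (by decide) hjU a01 a12 a23 a34
    · exact bad_cover cfg 4 3 2 1 0 (by decide) hjU a34.symm a23.symm a12.symm a01.symm
  · have h9 : HasDisjointPathCover G 9 := by
      fin_cases j
      · exact good_cover cfg i 0 1 hij
          (fun h => hbad (Or.inl ⟨h.symm, by decide⟩)) (by decide) a01 h2 h1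
      · by_cases hi0 : i = 0
        · exact good_cover cfg i 1 2 hij (by rw [hi0]; decide) (by decide) a12 h2 h1
        · exact good_cover cfg i 1 0 hij (fun h => hi0 h.symm) (by decide) a01.symm h2 h1
      · by_cases hi1 : i = 1
        · exact good_cover cfg i 2 3 hij (by rw [hi1]; decide) (by decide) a23 h2 h1
        · exact good_cover cfg i 2 1 hij (fun h => hi1 h.symm) (by decide) a12.symm h2 h1
      · by_cases hi4 : i = 4
        · exact good_cover cfg i 3 2 hij (by rw [hi4]; decide) (by decide) a23.symm h2 h1
        · exact good_cover cfg i 3 4 hij (fun h => hi4 h.symm) (by decide) a34 h2 h1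
      · exact good_cover cfg i 4 3 hij
          (fun h => hbad (Or.inr ⟨h.symm, by decide⟩)) (by decide) a34.symm h2 h1
    exact ⟨of9 h9, fun _ => h9⟩
end
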